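/- arXiv:2408.03719 — 2 statements merged into one kernel-verified Lean document; each statement's English description precedes it below -/
import Mathlib

section
/- For each 1 ≤ k ≤ m: every pair (ℬ, Δ) ∈ ℬ_{k−1} is contained in a unique region Δ′ of 𝒜_kᶜ/ℬ and satisfies exactly one of the three conditions in the definition of φ_k, and φ_k is a bijection from ℬ_{k−1} onto ℬ_k. -/
open Set

/-- An affine hyperplane in `ℝⁿ`, given by a nonzero normal vector `a` and
a constant `b`: the hyperplane is `{x : ⟨a, x⟩ = b}`. -/
structure Hyp (n : ℕ) where
  a : Fin n → ℝ
  b : ℝ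
  ha : a ≠ 0

/-- The hyperplane itself, as a subset of `ℝⁿ`. -/
def Hyp.carrier {n : ℕ} (H : Hyp n) : Set (Fin n → ℝ) := {x | ∑ i, H.a i * x i = H.b}

/-- The positive open side of a hyperplane. -/
def Hyp.pos {n : ℕ} (H : Hyp n) : Set (Fin n → ℝ) := {x | H.b < ∑ i, H.a i * x i}

/-- The negative open side of a hyperplane. -/
def Hyp.neg {n : ℕ} (H : Hyp n) : Set (Fin n → ℝ) := {x | ∑ i, H.a i * x i < H.b}

/-- The intersection `⋂ℬ` of the hyperplanes indexed by `S` (`ℝⁿ` if `S = ∅`). -/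
def interA {n m : ℕ} (H : Fin m → Hyp n) (S : Finset (Fin m)) : Set (Fin n → ℝ) :=
  ⋂ i ∈ S, (H i).carrier

/-- The dimension of an affine subset of `ℝⁿ` (the rank of its vector span). -/
noncomputable def adim {n : ℕ} (s : Set (Fin n → ℝ)) : ℕ :=
  Module.finrank ℝ (vectorSpan ℝ s)

/-- The defining property of an affine circuit: `⋂ℬ ≠ ∅` and `dim(⋂ℬ) + |ℬ| = n + 1`. -/
def CircuitProp {n m : ℕ} (H : Fin m → Hyp n) (S : Finset (Fin m)) : Prop :=
  (interA H S).Nonempty ∧ adim (interA H S) + S.card = n + 1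

/-- An affine circuit: an inclusion-minimal `S` with `⋂S ≠ ∅` and `dim(⋂S) + |S| = n + 1`. -/
def IsAffCircuit {n m : ℕ} (H : Fin m → Hyp n) (S : Finset (Fin m)) : Prop :=
  CircuitProp H S ∧ ∀ T ⊂ S, ¬ CircuitProp H T

/-- An affine NBC subset: `⋂S ≠ ∅` and `S` contains no affine broken circuit, i.e. no
affine circuit with its maximal element deleted. -/
def IsAffNBC {n m : ℕ} (H : Fin m → Hyp n) (S : Finset (Fin m)) : Prop :=
  (interA H S).Nonempty ∧
    ∀ T : Finset (Fin m), IsAffCircuit H T → ∀ h : T.Nonempty, ¬ T.erase (T.max' h) ⊆ S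

/-- `Δ` is a region of the open set `U`, i.e. a connected component of `U`. -/
def IsRegionIn {n : ℕ} (U Δ : Set (Fin n → ℝ)) : Prop :=
  ∃ x ∈ U, Δ = connectedComponentIn U x

/-- The set of regions of the arrangement `H`: connected components of the complement
of the union of the hyperplanes. -/
def regions {n m : ℕ} (H : Fin m → Hyp n) : Set (Set (Fin n → ℝ)) :=
  {Δ | IsRegionIn (Set.univ \ ⋃ i, (H i).carrier) Δ}

/-- `𝒜_k = {H₁, …, H_k}`, as a set of indices. -/
def Ak (m k : ℕ) : Finset (Fin m) := Finset.filter (fun i => (i : ℕ) < k) Finset.univ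

/-- The underlying open set of the restriction `𝒜_kᶜ/ℬ`: the affine subspace `⋂ℬ`
minus the traces `(⋂ℬ) ∩ H` of those hyperplanes `H ∈ 𝒜_kᶜ` with
`∅ ≠ (⋂ℬ) ∩ H ⊊ ⋂ℬ`; its connected components are the regions of `𝒜_kᶜ/ℬ`. -/
def restCompl {n m : ℕ} (H : Fin m → Hyp n) (k : ℕ) (S : Finset (Fin m)) :
    Set (Fin n → ℝ) :=
  interA H S \
    ⋃ i ∈ {i : Fin m | k ≤ (i : ℕ) ∧ (interA H S ∩ (H i).carrier).Nonempty ∧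
        interA H S ∩ (H i).carrier ≠ interA H S}, (H i).carrier

/-- The set `ℬ_k` of pairs `(ℬ, Δ)` with `ℬ ⊆ 𝒜_k` an affine NBC subset of `𝒜`
and `Δ` a region of `𝒜_kᶜ/ℬ`. -/
def BFam {n m : ℕ} (H : Fin m → Hyp n) (k : ℕ) :
    Set (Finset (Fin m) × Set (Fin n → ℝ)) :=
  {p | p.1 ⊆ Ak m k ∧ IsAffNBC H p.1 ∧ IsRegionIn (restCompl H k p.1) p.2}

/-- The union of the connected components of `U` meeting `Δ`; when `Δ` is a nonempty
connected subset of `U` this is the unique region of `U` containing `Δ`. -/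
def compIn {n : ℕ} (U Δ : Set (Fin n → ℝ)) : Set (Fin n → ℝ) :=
  ⋃ x ∈ Δ, connectedComponentIn U x

open scoped Classical in
/-- The map `φ_k` (with `e = H_k`): for `(ℬ, Δ) ∈ ℬ_{k−1}`, letting `Δ′` be the unique
region of `𝒜_kᶜ/ℬ` containing `Δ`,
`φ_k(ℬ, Δ) = (ℬ ∪ {H_k}, Δ′ ∩ H_k)` if `Δ ⊆ H_k⁺` and `Δ ≠ Δ′`,
`φ_k(ℬ, Δ) = (ℬ, Δ)` if `Δ ⊆ H_k⁺` and `Δ = Δ′`, and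
`φ_k(ℬ, Δ) = (ℬ, Δ′)` if `Δ ⊆ H_k⁻`. -/
noncomputable def phi {n m : ℕ} (H : Fin m → Hyp n) (k : ℕ) (e : Fin m)
    (p : Finset (Fin m) × Set (Fin n → ℝ)) : Finset (Fin m) × Set (Fin n → ℝ) :=
  if p.2 ⊆ (H e).pos ∧ p.2 ≠ compIn (restCompl H k p.1) p.2 then
    (insert e p.1, compIn (restCompl H k p.1) p.2 ∩ (H e).carrier)
  else if p.2 ⊆ (H e).pos ∧ p.2 = compIn (restCompl H k p.1) p.2 then p
  else if p.2 ⊆ (H e).neg then (p.1, compIn (restCompl H k p.1) p.2)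
  else p

namespace NBCaux
variable {n m : ℕ}
def ev (h : Hyp n) (x : Fin n → ℝ) : ℝ := ∑ i, h.a i * x i - h.b
lemma mem_carrier {h : Hyp n} {x} : x ∈ h.carrier ↔ ev h x = 0 := by
  constructor
  · intro hx; simp only [ev, Set.mem_setOf_eq] at hx ⊢; rw [hx]; ring
  · intro hx; simp only [ev] at hx; simp only [Hyp.carrier, Set.mem_setOf_eq]; linarith
lemma mem_pos {h : Hyp n} {x} : x ∈ h.pos ↔ 0 < ev h x := by
  simp only [Hyp.pos, Set.mem_setOf_eq, ev]
  constructor <;> intro h' <;> linarith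

lemma mem_neg {h : Hyp n} {x} : x ∈ h.neg ↔ ev h x < 0 := by
  simp only [Hyp.neg, Set.mem_setOf_eq, ev]
  constructor <;> intro h' <;> linarith

lemma ev_continuous (h : Hyp n) : Continuous (ev h) := by
  unfold ev; fun_prop
lemma ev_affine (h : Hyp n) {a b : ℝ} (hab : a + b = 1) (x y : Fin n → ℝ) :
    ev h (a • x + b • y) = a * ev h x + b * ev h y := by
  have h1 : ∀ i, h.a i * (a * x i + b * y i) = a * (h.a i * x i) + b * (h.a i * y i) := by
    intro i; ring
  simp only [ev, Pi.add_apply, Pi.smul_apply, smul_eq_mul]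
  rw [Finset.sum_congr rfl fun i _ => h1 i, Finset.sum_add_distrib, ← Finset.mul_sum,
    ← Finset.mul_sum]
  linear_combination h.b * hab

lemma ev_line (h : Hyp n) (x y : Fin n → ℝ) (t : ℝ) :
    ev h (x + t • (y - x)) = ev h x + t * (ev h y - ev h x) := by
  have hxy : x + t • (y - x) = (1 - t) • x + t • y := by
    funext i
    simp only [Pi.add_apply, Pi.smul_apply, Pi.sub_apply, smul_eq_mul]
    ring
  rw [hxy, ev_affine h (by ring) x y]
  ring

lemma mem_interA {H : Fin m → Hyp n} {S : Finset (Fin m)} {x} :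
    x ∈ interA H S ↔ ∀ i ∈ S, ev (H i) x = 0 := by
  simp [interA, mem_carrier]

lemma convex_interA (H : Fin m → Hyp n) (S : Finset (Fin m)) : Convex ℝ (interA H S) := by
  intro x hx y hy a b ha hb hab
  rw [mem_interA] at *
  intro i hi
  rw [ev_affine _ hab, hx i hi, hy i hi]; ring

/-- the sign region of `x` rel. a set `J` of hyperplane indices, inside `interA H S` -/
def sgnSet (H : Fin m → Hyp n) (S : Finset (Fin m)) (J : Set (Fin m)) (x : Fin n → ℝ) :
    Set (Fin n → ℝ) :=
  {y ∈ interA H S | ∀ i ∈ J, 0 < ev (H i) x * ev (H i) y}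

lemma convex_sgnSet (H : Fin m → Hyp n) (S : Finset (Fin m)) (J : Set (Fin m)) (x) :
    Convex ℝ (sgnSet H S J x) := by
  intro y hy z hz a b ha hb hab
  refine ⟨convex_interA H S hy.1 hz.1 ha hb hab, fun i hi => ?_⟩
  rw [ev_affine _ hab]
  have h1 := hy.2 i hi
  have h2 := hz.2 i hi
  nlinarith [mul_nonneg ha h1.le, mul_nonneg hb h2.le, mul_pos h1 h2]

/-- Characterization of connected components of the complement of a subarrangement
inside `interA H S` as sign regions. -/
lemma comp_eq_sgn (H : Fin m → Hyp n) (S : Finset (Fin m)) (J : Set (Fin m)) (x : Fin n → ℝ)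
    (hx : x ∈ interA H S \ ⋃ i ∈ J, (H i).carrier) :
    connectedComponentIn (interA H S \ ⋃ i ∈ J, (H i).carrier) x = sgnSet H S J x := by
  set U := interA H S \ ⋃ i ∈ J, (H i).carrier with hU
  have hxne : ∀ i ∈ J, ev (H i) x ≠ 0 := by
    intro i hi h0
    exact hx.2 (mem_biUnion hi (mem_carrier.2 h0))
  apply Subset.antisymm
  · intro y hy
    have hyU : y ∈ U := connectedComponentIn_subset U x hy
    refine ⟨hyU.1, fun i hi => ?_⟩
    have hyne : ev (H i) y ≠ 0 := by
      intro h0; exact hyU.2 (mem_biUnion hi (mem_carrier.2 h0))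
    -- two open half spaces argument
    have hsub : connectedComponentIn U x ⊆ {y | 0 < ev (H i) x * ev (H i) y} := by
      apply IsPreconnected.subset_left_of_subset_union
        (u := {y | 0 < ev (H i) x * ev (H i) y}) (v := {y | ev (H i) x * ev (H i) y < 0})
      · exact isOpen_lt continuous_const (continuous_const.mul (ev_continuous (H i)))
      · exact isOpen_lt (continuous_const.mul (ev_continuous (H i))) continuous_const
      · rw [Set.disjoint_left]; intro t ht1 ht2; simp only [Set.mem_setOf_eq] at ht1 ht2; linarith
      · intro t ht
        have htU : t ∈ U := connectedComponentIn_subset U x ht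
        have htne : ev (H i) t ≠ 0 := by
          intro h0; exact htU.2 (mem_biUnion hi (mem_carrier.2 h0))
        rcases lt_or_gt_of_ne (mul_ne_zero (hxne i hi) htne) with h | h
        · exact Or.inr h
        · exact Or.inl h
      · exact ⟨x, mem_connectedComponentIn hx, mul_pos_iff.2 <| by
          rcases (hxne i hi).lt_or_gt with h | h
          · exact Or.inr ⟨h, h⟩
          · exact Or.inl ⟨h, h⟩⟩
      · exact isPreconnected_connectedComponentIn
    exact hsub hy
  · apply IsPreconnected.subset_connectedComponentIn
    · exact (convex_sgnSet H S J x).isPreconnected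
    · exact ⟨hx.1, fun i hi => mul_pos_iff.2 <| by
        rcases (hxne i hi).lt_or_gt with h | h
        · exact Or.inr ⟨h, h⟩
        · exact Or.inl ⟨h, h⟩⟩
    · intro y hy
      refine ⟨hy.1, fun hmem => ?_⟩
      rcases mem_iUnion₂.1 hmem with ⟨i, hi, hci⟩
      have := hy.2 i hi
      rw [mem_carrier.1 hci] at this
      simp at this

/-- constant sign of a nonvanishing functional on a preconnected set -/
lemma sign_const {h : Hyp n} {s : Set (Fin n → ℝ)} (hs : IsPreconnected s)
    (hne : ∀ y ∈ s, ev h y ≠ 0) {x y : Fin n → ℝ} (hx : x ∈ s) (hy : y ∈ s) :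
    0 < ev h x * ev h y := by
  have hsub : s ⊆ {y | 0 < ev h x * ev h y} := by
    apply IsPreconnected.subset_left_of_subset_union
      (u := {y | 0 < ev h x * ev h y}) (v := {y | ev h x * ev h y < 0})
    · exact isOpen_lt continuous_const (continuous_const.mul (ev_continuous h))
    · exact isOpen_lt (continuous_const.mul (ev_continuous h)) continuous_const
    · rw [Set.disjoint_left]; intro t ht1 ht2; simp only [Set.mem_setOf_eq] at ht1 ht2; linarith
    · intro t ht
      rcases lt_or_gt_of_ne (mul_ne_zero (hne x hx) (hne t ht)) with h' | h'
      · exact Or.inr h'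
      · exact Or.inl h'
    · exact ⟨x, hx, mul_pos_iff.2 <| by
        rcases (hne x hx).lt_or_gt with h' | h'
        · exact Or.inr ⟨h', h'⟩
        · exact Or.inl ⟨h', h'⟩⟩
    · exact hs
  exact hsub hy

lemma compIn_eq {U Δ : Set (Fin n → ℝ)} {x : Fin n → ℝ} (hΔ : IsPreconnected Δ)
    (hx : x ∈ Δ) (hΔU : Δ ⊆ U) : compIn U Δ = connectedComponentIn U x := by
  have hsub : Δ ⊆ connectedComponentIn U x := hΔ.subset_connectedComponentIn hx hΔU
  have : ∀ z ∈ Δ, connectedComponentIn U z = connectedComponentIn U x :=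
    fun z hz => (connectedComponentIn_eq (hsub hz)).symm
  rw [compIn]
  apply Subset.antisymm
  · exact iUnion₂_subset fun z hz => (this z hz).le
  · exact le_iSup₂_of_le x hx le_rfl

/-- the linear functional of a hyperplane -/
noncomputable def lfun (h : Hyp n) : Module.Dual ℝ (Fin n → ℝ) :=
  ∑ j, h.a j • LinearMap.proj j

lemma lfun_apply (h : Hyp n) (x : Fin n → ℝ) : lfun h x = ∑ j, h.a j * x j := by
  simp [lfun, LinearMap.proj]

lemma ev_eq_lfun (h : Hyp n) (x) : ev h x = lfun h x - h.b := by simp [ev, lfun_apply]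

lemma mem_carrier' {h : Hyp n} {x} : x ∈ h.carrier ↔ lfun h x = h.b := by
  rw [mem_carrier, ev_eq_lfun, sub_eq_zero]

/-- span of the linear functionals indexed by `S` -/
noncomputable def spanS (H : Fin m → Hyp n) (S : Finset (Fin m)) :
    Submodule ℝ (Module.Dual ℝ (Fin n → ℝ)) :=
  Submodule.span ℝ ((fun i => lfun (H i)) '' ↑S)

lemma mem_spanS {H : Fin m → Hyp n} {S : Finset (Fin m)} {f : Module.Dual ℝ (Fin n → ℝ)} :
    f ∈ spanS H S ↔ ∃ c : Fin m → ℝ, ∑ i ∈ S, c i • lfun (H i) = f := by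
  constructor
  · intro hf
    set Ψ : (Fin m → ℝ) →ₗ[ℝ] Module.Dual ℝ (Fin n → ℝ) :=
      ∑ i ∈ S, (LinearMap.proj i).smulRight (lfun (H i)) with hΨ
    have hΨap : ∀ c, Ψ c = ∑ i ∈ S, c i • lfun (H i) := by
      intro c; rw [hΨ]; simp [LinearMap.sum_apply]
    have hsub : spanS H S ≤ LinearMap.range Ψ := by
      rw [spanS, Submodule.span_le]
      rintro g ⟨i, hi, rfl⟩
      refine ⟨Pi.single i 1, ?_⟩
      rw [hΨap]
      rw [Finset.sum_eq_single i]
      · simp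
      · intro j hj hji; rw [Pi.single_eq_of_ne hji]; simp
      · intro h; exact absurd hi h
    obtain ⟨c, hc⟩ := hsub hf
    exact ⟨c, by rw [← hΨap c, hc]⟩
  · rintro ⟨c, rfl⟩
    apply Submodule.sum_mem
    intro i hi
    exact Submodule.smul_mem _ _ (Submodule.subset_span ⟨i, hi, rfl⟩)

lemma sub_mem_coann {H : Fin m → Hyp n} {S : Finset (Fin m)} {x₀ : Fin n → ℝ}
    (hx₀ : x₀ ∈ interA H S) {y : Fin n → ℝ} :
    y ∈ interA H S ↔ y - x₀ ∈ (spanS H S).dualCoannihilator := by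
  rw [spanS, ← SetLike.mem_coe, Submodule.coe_dualCoannihilator_span]
  constructor
  · intro hy
    rintro f ⟨i, hi, rfl⟩
    rw [map_sub]
    have h1 := mem_interA.1 hy i hi; have h2 := mem_interA.1 hx₀ i hi
    rw [ev_eq_lfun] at h1 h2
    linarith
  · intro hy
    rw [mem_interA]
    intro i hi
    have := hy (lfun (H i)) ⟨i, hi, rfl⟩
    rw [map_sub] at this
    have h2 := mem_interA.1 hx₀ i hi
    rw [ev_eq_lfun] at h2 ⊢
    linarith

lemma adim_add_finrank {H : Fin m → Hyp n} {S : Finset (Fin m)} {x₀ : Fin n → ℝ}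
    (hx₀ : x₀ ∈ interA H S) :
    adim (interA H S) + Module.finrank ℝ (spanS H S) = n := by
  set K := (spanS H S).dualCoannihilator with hK
  have hset : interA H S = (fun v => x₀ + v) '' (K : Set (Fin n → ℝ)) := by
    ext y
    constructor
    · intro hy
      refine ⟨y - x₀, (sub_mem_coann hx₀).1 hy, by module⟩
    · rintro ⟨v, hv, rfl⟩
      rw [sub_mem_coann hx₀]
      have h2 : x₀ + v - x₀ = v := by module
      rw [h2]; exact hv
  have hvs : vectorSpan ℝ (interA H S) = K := by
    rw [hset, vectorSpan_def]
    have himg : ((fun v => x₀ + v) '' (K : Set (Fin n → ℝ))) -ᵥ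
        ((fun v => x₀ + v) '' (K : Set (Fin n → ℝ))) = (K : Set (Fin n → ℝ)) := by
      ext v
      constructor
      · rintro ⟨p, ⟨kp, hkp, rfl⟩, q, ⟨kq, hkq, rfl⟩, rfl⟩
        show (x₀ + kp) -ᵥ (x₀ + kq) ∈ (K : Set (Fin n → ℝ))
        have h2 : (x₀ + kp) -ᵥ (x₀ + kq) = kp - kq := by
          simp only [vsub_eq_sub]; module
        rw [h2]
        exact K.sub_mem hkp hkq
      · intro hv
        exact ⟨x₀ + v, ⟨v, hv, rfl⟩, x₀ + 0, ⟨0, K.zero_mem, rfl⟩, by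
          simp [vsub_eq_sub]⟩
    rw [himg, Submodule.span_eq]
  have := Subspace.finrank_add_finrank_dualCoannihilator_eq (spanS H S)
  rw [adim, hvs, hK]
  have hn : Module.finrank ℝ (Fin n → ℝ) = n := by
    simp [Module.finrank_pi]
  omega

lemma finrank_spanS_le (H : Fin m → Hyp n) (S : Finset (Fin m)) :
    Module.finrank ℝ (spanS H S) ≤ n := by
  have h := Subspace.finrank_add_finrank_dualCoannihilator_eq (spanS H S)
  have hn : Module.finrank ℝ (Fin n → ℝ) = n := by simp [Module.finrank_pi]
  omega

lemma circuitProp_iff {H : Fin m → Hyp n} {S : Finset (Fin m)} {x₀ : Fin n → ℝ}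
    (hx₀ : x₀ ∈ interA H S) :
    CircuitProp H S ↔ Module.finrank ℝ (spanS H S) + 1 = S.card := by
  have h1 := adim_add_finrank hx₀
  constructor
  · rintro ⟨-, h2⟩; omega
  · intro h2; exact ⟨⟨x₀, hx₀⟩, by omega⟩

/-- dependency of the family of functionals indexed by `S` -/
def Dep (H : Fin m → Hyp n) (S : Finset (Fin m)) : Prop :=
  ∃ c : Fin m → ℝ, ∑ i ∈ S, c i • lfun (H i) = 0 ∧ ∃ t ∈ S, c t ≠ 0

lemma Dep.mono {H : Fin m → Hyp n} {S S' : Finset (Fin m)} (hss : S ⊆ S') (h : Dep H S) :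
    Dep H S' := by
  classical
  obtain ⟨c, hc, t, ht, hct⟩ := h
  refine ⟨fun i => if i ∈ S then c i else 0, ?_, t, hss ht, by simp [ht, hct]⟩
  rw [← Finset.sum_subset hss (fun i _ hi => by simp [hi])]
  rw [← hc]
  exact Finset.sum_congr rfl fun i hi => by simp [hi]

lemma finrank_spanS_of_notDep {H : Fin m → Hyp n} {S : Finset (Fin m)} (h : ¬ Dep H S) :
    Module.finrank ℝ (spanS H S) = S.card := by
  classical
  have hli : LinearIndependent ℝ (fun i : {x // x ∈ S} => lfun (H i.1)) := by
    rw [Fintype.linearIndependent_iff]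
    intro g hg
    by_contra hne
    push_neg at hne
    obtain ⟨t, ht⟩ := hne
    apply h
    refine ⟨fun i => if hi : i ∈ S then g ⟨i, hi⟩ else 0, ?_, t.1, t.2, by simp [t.2]; exact ht⟩
    rw [← Finset.sum_attach S (fun i => (if hi : i ∈ S then g ⟨i, hi⟩ else 0) • lfun (H i))]
    rw [← hg]
    exact Finset.sum_congr rfl fun i _ => by simp [i.2]
  have := finrank_span_eq_card hli
  rw [Fintype.card_coe] at this
  have hset : ((fun i => lfun (H i)) '' ↑S) =
      Set.range (fun i : {x // x ∈ S} => lfun (H i.1)) := by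
    ext f
    constructor
    · rintro ⟨i, hi, rfl⟩; exact ⟨⟨i, Finset.mem_coe.1 hi⟩, rfl⟩
    · rintro ⟨⟨i, hi⟩, rfl⟩; exact ⟨i, Finset.mem_coe.2 hi, rfl⟩
  rw [← this, spanS, hset]

lemma notDep_of_circuitProp {H : Fin m → Hyp n} {S : Finset (Fin m)}
    (h : CircuitProp H S) : Dep H S := by
  obtain ⟨x₀, hx₀⟩ := h.1
  have h2 := (circuitProp_iff hx₀).1 h
  by_contra hd
  rw [finrank_spanS_of_notDep hd] at h2
  omega

lemma not_circuitProp_of_notDep {H : Fin m → Hyp n} {S : Finset (Fin m)}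
    (h : ¬ Dep H S) : ¬ CircuitProp H S := by
  intro hc
  obtain ⟨x₀, hx₀⟩ := hc.1
  have h2 := (circuitProp_iff hx₀).1 hc
  rw [finrank_spanS_of_notDep h] at h2
  omega

lemma interA_anti {H : Fin m → Hyp n} {S S' : Finset (Fin m)} (h : S ⊆ S') :
    interA H S' ⊆ interA H S := by
  intro x hx
  rw [mem_interA] at *
  exact fun i hi => hx i (h hi)

lemma interA_insert {H : Fin m → Hyp n} {S : Finset (Fin m)} {j : Fin m} :
    interA H (insert j S) = (H j).carrier ∩ interA H S := by
  ext x
  simp only [mem_interA, Finset.mem_insert, Set.mem_inter_iff, mem_carrier]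
  constructor
  · intro h; exact ⟨h j (Or.inl rfl), fun i hi => h i (Or.inr hi)⟩
  · rintro ⟨h1, h2⟩ i (rfl | hi)
    · exact h1
    · exact h2 i hi

lemma spanS_mono {H : Fin m → Hyp n} {S S' : Finset (Fin m)} (h : S ⊆ S') :
    spanS H S ≤ spanS H S' :=
  Submodule.span_mono (Set.image_mono (Finset.coe_subset.2 h))

lemma spanS_insert {H : Fin m → Hyp n} {S : Finset (Fin m)} {j : Fin m} :
    spanS H (insert j S) = Submodule.span ℝ (insert (lfun (H j)) ((fun i => lfun (H i)) '' ↑S)) := by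
  rw [spanS, Finset.coe_insert, Set.image_insert_eq]

lemma apply_eq_of_mem_spanS {H : Fin m → Hyp n} {S : Finset (Fin m)}
    {f : Module.Dual ℝ (Fin n → ℝ)} (hf : f ∈ spanS H S) {y₀ y : Fin n → ℝ}
    (hy₀ : y₀ ∈ interA H S) (hy : y ∈ interA H S) : f y = f y₀ := by
  have h1 := (sub_mem_coann hy₀).1 hy
  have h2 := (Submodule.mem_dualCoannihilator (y - y₀)).1 h1 f hf
  rw [map_sub] at h2
  linarith

/-- From a containment `interA S ⊆ carrier j` with all indices of `S` less than `j`,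
we obtain an affine circuit `insert j T` with `T ⊆ S`. -/
lemma exists_circuit {H : Fin m → Hyp n} {S : Finset (Fin m)} {j : Fin m} {x₀ : Fin n → ℝ}
    (hx₀ : x₀ ∈ interA H S) (hj : j ∉ S)
    (hsub : interA H S ⊆ (H j).carrier) :
    ∃ T ⊆ S, j ∉ T ∧ IsAffCircuit H (insert j T) := by
  classical
  -- (1) lfun j lies in the span
  have h1 : lfun (H j) ∈ spanS H S := by
    have hkill : ∀ v ∈ (spanS H S).dualCoannihilator, lfun (H j) v = 0 := by
      intro v hv
      have hmem : x₀ + v ∈ interA H S := by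
        rw [sub_mem_coann hx₀]
        have h2 : x₀ + v - x₀ = v := by module
        rw [h2]; exact hv
      have hc1 := mem_carrier'.1 (hsub hmem)
      have hc0 := mem_carrier'.1 (hsub hx₀)
      rw [map_add] at hc1
      linarith
    have hmem : lfun (H j) ∈ ((spanS H S).dualCoannihilator).dualAnnihilator := by
      rw [Submodule.mem_dualAnnihilator]
      exact hkill
    rwa [Subspace.dualCoannihilator_dualAnnihilator_eq] at hmem
  -- (2) minimal T ⊆ S with lfun j ∈ spanS T
  obtain ⟨T, hT, hTmin⟩ : ∃ T ∈ (S.powerset).filter (fun T => lfun (H j) ∈ spanS H T),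
      ∀ x ∈ (S.powerset).filter (fun T => lfun (H j) ∈ spanS H T), ¬ x < T := by
    obtain ⟨T, hT, hTm⟩ := Finset.exists_minimal
      (s := (S.powerset).filter (fun T => lfun (H j) ∈ spanS H T))
      ⟨S, by simp [Finset.mem_filter, Finset.mem_powerset, h1]⟩
    exact ⟨T, hT, fun x hx hlt => hlt.not_ge (hTm hx hlt.le)⟩
  rw [Finset.mem_filter, Finset.mem_powerset] at hT
  obtain ⟨hTS, hTspan⟩ := hT
  have hmin : ∀ T' ⊂ T, lfun (H j) ∉ spanS H T' := by
    intro T' hT' hsp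
    exact hTmin T' (by
      rw [Finset.mem_filter, Finset.mem_powerset]
      exact ⟨hT'.subset.trans hTS, hsp⟩) hT'
  have hjT : j ∉ T := fun h => hj (hTS h)
  -- (3) T is independent
  have hTindep : ¬ Dep H T := by
    rintro ⟨g, hg, t, htT, hgt⟩
    obtain ⟨c, hc⟩ := mem_spanS.1 hTspan
    apply hmin (T.erase t) (Finset.erase_ssubset htT)
    rw [mem_spanS]
    refine ⟨fun i => c i - (c t / g t) * g i, ?_⟩
    show ∑ i ∈ T.erase t, (c i - (c t / g t) * g i) • lfun (H i) = lfun (H j)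
    have key : ∀ i ∈ T, (c i - (c t / g t) * g i) • lfun (H i)
        = c i • lfun (H i) - (c t / g t) • (g i • lfun (H i)) := by
      intro i _
      match_scalars <;> ring
    have hsumT : ∑ i ∈ T, (c i - (c t / g t) * g i) • lfun (H i) = lfun (H j) := by
      rw [Finset.sum_congr rfl key, Finset.sum_sub_distrib, ← Finset.smul_sum, hg, hc,
        smul_zero, sub_zero]
    have hot : ∑ i ∈ T.erase t, (c i - (c t / g t) * g i) • lfun (H i)
        = ∑ i ∈ T, (c i - (c t / g t) * g i) • lfun (H i) := by
      rw [← Finset.sum_erase_add T _ htT]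
      have hz : (c t - (c t / g t) * g t) = 0 := by field_simp; ring
      rw [hz, zero_smul, add_zero]
    rw [hot, hsumT]
  -- independence of all proper subsets of insert j T
  have hRindep : ∀ R ⊂ insert j T, ¬ Dep H R := by
    intro R hR hdep
    by_cases hjR : j ∈ R
    · -- write R = insert j T'  with T' ⊊ T
      set T' := R.erase j with hT'
      have hT'T : T' ⊆ T := by
        intro i hi
        rw [hT', Finset.mem_erase] at hi
        rcases Finset.mem_insert.1 (hR.subset hi.2) with h | h
        · exact absurd h hi.1
        · exact h
      have hT'ne : T' ⊂ T := by
        refine ⟨hT'T, fun hcon => ?_⟩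
        apply hR.2
        intro i hi
        rcases Finset.mem_insert.1 hi with rfl | hiT
        · exact hjR
        · have := hcon hiT
          rw [hT', Finset.mem_erase] at this
          exact this.2
      obtain ⟨c, hc, t, htR, hct⟩ := hdep
      have h2 : ∑ x ∈ R.erase j, c x • lfun (H x) + c j • lfun (H j)
          = ∑ x ∈ R, c x • lfun (H x) :=
        Finset.sum_erase_add R (fun i => c i • lfun (H i)) hjR
      by_cases hcj : c j = 0
      · apply hTindep
        apply Dep.mono hT'T
        refine ⟨c, ?_, t, ?_, hct⟩
        · show ∑ i ∈ T', c i • lfun (H i) = 0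
          rw [hT']
          have h3 : ∑ i ∈ R.erase j, c i • lfun (H i)
              = ∑ i ∈ R, c i • lfun (H i) := by
            rw [← h2, hcj, zero_smul, add_zero]
          rw [h3, hc]
        · rw [hT', Finset.mem_erase]
          exact ⟨fun h => hct (h ▸ hcj), htR⟩
      · apply hmin T' hT'ne
        rw [mem_spanS]
        refine ⟨fun i => -(c i / c j), ?_⟩
        show ∑ i ∈ T', (-(c i / c j)) • lfun (H i) = lfun (H j)
        have h0 : ∑ i ∈ T', c i • lfun (H i) = -(c j • lfun (H j)) := by
          rw [hT']
          have := h2.trans hc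
          exact eq_neg_of_add_eq_zero_left this
        have key : ∀ i ∈ T', (-(c i / c j)) • lfun (H i)
            = (-(1 / c j)) • (c i • lfun (H i)) := by
          intro i _
          match_scalars <;> ring
        rw [Finset.sum_congr rfl key, ← Finset.smul_sum, h0]
        match_scalars
        field_simp
    · exact hTindep (Dep.mono (fun i hi => by
        rcases Finset.mem_insert.1 (hR.subset hi) with rfl | h
        · exact absurd hi hjR
        · exact h) hdep)
  -- x₀ ∈ interA (insert j T)
  have hx₀' : x₀ ∈ interA H (insert j T) := by
    rw [interA_insert]
    exact ⟨hsub hx₀, interA_anti hTS hx₀⟩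
  refine ⟨T, hTS, hjT, ⟨?_, ?_⟩⟩
  · rw [circuitProp_iff hx₀']
    have hsp : spanS H (insert j T) = spanS H T := by
      rw [spanS_insert, Submodule.span_insert_eq_span hTspan, spanS]
    rw [hsp, finrank_spanS_of_notDep hTindep, Finset.card_insert_of_notMem hjT]
  · intro R hR hCP
    exact not_circuitProp_of_notDep (hRindep R hR) hCP

lemma finrank_span_singleton_le (v : Module.Dual ℝ (Fin n → ℝ)) :
    Module.finrank ℝ (ℝ ∙ v) ≤ 1 := by
  by_cases hv : v = 0
  · rw [hv, Submodule.span_zero_singleton]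
    rw [finrank_bot]
    omega
  · rw [finrank_span_singleton hv]

/-- erasing any element of a circuit does not change the intersection -/
lemma circuit_erase {H : Fin m → Hyp n} {T : Finset (Fin m)} (hT : IsAffCircuit H T)
    {t : Fin m} (ht : t ∈ T) : interA H (T.erase t) = interA H T := by
  obtain ⟨y₀, hy₀⟩ := hT.1.1
  have hBsub : T.erase t ⊆ T := Finset.erase_subset _ _
  have hy₀B : y₀ ∈ interA H (T.erase t) := interA_anti hBsub hy₀
  have hrT := (circuitProp_iff hy₀).1 hT.1
  have hnc := hT.2 (T.erase t) (Finset.erase_ssubset ht)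
  rw [circuitProp_iff hy₀B] at hnc
  have hcard : (T.erase t).card = T.card - 1 := Finset.card_erase_of_mem ht
  have hTpos : 1 ≤ T.card := Finset.card_pos.2 ⟨t, ht⟩
  have hmono : Module.finrank ℝ (spanS H (T.erase t)) ≤ Module.finrank ℝ (spanS H T) :=
    Submodule.finrank_mono (spanS_mono hBsub)
  have hup : Module.finrank ℝ (spanS H T) ≤ Module.finrank ℝ (spanS H (T.erase t)) + 1 := by
    conv_lhs => rw [← Finset.insert_erase ht]
    rw [spanS_insert, Submodule.span_insert]
    have h1 := Submodule.finrank_sup_add_finrank_inf_eq (ℝ ∙ lfun (H t))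
      (Submodule.span ℝ ((fun i => lfun (H i)) '' ↑(T.erase t)))
    have h2 := finrank_span_singleton_le (lfun (H t))
    rw [spanS]
    omega
  have heq : Module.finrank ℝ (spanS H (T.erase t)) = Module.finrank ℝ (spanS H T) := by
    omega
  have hspan : spanS H (T.erase t) = spanS H T :=
    Submodule.eq_of_le_of_finrank_le (spanS_mono hBsub) heq.ge
  have hlt : lfun (H t) ∈ spanS H (T.erase t) := by
    rw [hspan]
    exact Submodule.subset_span ⟨t, ht, rfl⟩
  have hsubcar : interA H (T.erase t) ⊆ (H t).carrier := by
    intro y hy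
    have h3 := apply_eq_of_mem_spanS hlt hy₀B hy
    rw [mem_carrier']
    rw [h3]
    exact mem_carrier'.1 (Set.mem_iInter₂.1 hy₀ t ht)
  apply Subset.antisymm
  · intro y hy
    rw [← Finset.insert_erase ht, interA_insert]
    exact ⟨hsubcar hy, hy⟩
  · exact interA_anti hBsub

/-- NBC sets are not contained in later hyperplanes -/
lemma nbc_no_sub {H : Fin m → Hyp n} {S : Finset (Fin m)} (hnbc : IsAffNBC H S)
    {j : Fin m} (hlt : ∀ i ∈ S, (i : ℕ) < (j : ℕ)) :
    ¬ (interA H S ⊆ (H j).carrier) := by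
  intro hsub
  obtain ⟨x₀, hx₀⟩ := hnbc.1
  have hjS : j ∉ S := fun h => lt_irrefl _ (hlt j h)
  obtain ⟨T, hTS, hjT, hcirc⟩ := exists_circuit hx₀ hjS hsub
  have hne : (insert j T).Nonempty := ⟨j, Finset.mem_insert_self j T⟩
  have hmax : (insert j T).max' hne = j := by
    apply le_antisymm
    · apply Finset.max'_le
      intro x hx
      rcases Finset.mem_insert.1 hx with rfl | hx
      · exact le_rfl
      · exact le_of_lt (by rw [Fin.lt_def]; exact hlt x (hTS hx))
    · exact Finset.le_max' _ j (Finset.mem_insert_self j T)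
  apply hnbc.2 (insert j T) hcirc hne
  rw [hmax, Finset.erase_insert hjT]
  exact hTS

lemma nbc_subset {H : Fin m → Hyp n} {S S' : Finset (Fin m)} (hnbc : IsAffNBC H S')
    (hss : S ⊆ S') : IsAffNBC H S := by
  obtain ⟨x₀, hx₀⟩ := hnbc.1
  exact ⟨⟨x₀, interA_anti hss hx₀⟩, fun T hT h hsub => hnbc.2 T hT h (hsub.trans hss)⟩

/-- inserting a hyperplane into an NBC set stays NBC, provided there is a point of
`interA S ∩ carrier e` avoiding all hyperplanes of index `> e`. -/
lemma nbc_insert {H : Fin m → Hyp n} {S : Finset (Fin m)} (hnbc : IsAffNBC H S)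
    {e : Fin m} {z : Fin n → ℝ} (hz : z ∈ interA H S) (hze : z ∈ (H e).carrier)
    (hzj : ∀ j : Fin m, (e : ℕ) < (j : ℕ) → z ∉ (H j).carrier) :
    IsAffNBC H (insert e S) := by
  have hzi : z ∈ interA H (insert e S) := by
    rw [interA_insert]; exact ⟨hze, hz⟩
  refine ⟨⟨z, hzi⟩, ?_⟩
  intro T hT hne hBsub
  by_cases heB : e ∈ T.erase (T.max' hne)
  · set j := T.max' hne with hj
    have hej : (e : ℕ) < (j : ℕ) := by
      have h1 : e ≤ j := Finset.le_max' T e (Finset.mem_of_mem_erase heB)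
      have h2 : e ≠ j := Finset.ne_of_mem_erase heB
      rw [Fin.le_def] at h1
      rcases lt_or_eq_of_le h1 with h | h
      · exact h
      · exact absurd (Fin.ext h) h2
    have hCF := circuit_erase hT (T.max'_mem hne)
    have hzB : z ∈ interA H (T.erase j) := interA_anti hBsub hzi
    rw [hCF] at hzB
    have hzcar : z ∈ (H j).carrier := Set.mem_iInter₂.1 hzB j (T.max'_mem hne)
    exact hzj j hej hzcar
  · have hBS : T.erase (T.max' hne) ⊆ S := by
      intro i hi
      rcases Finset.mem_insert.1 (hBsub hi) with rfl | h
      · exact absurd hi heB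
      · exact h
    exact hnbc.2 T hT hne hBS

/-! ### Layer 3: arrangement restriction infrastructure -/

/-- index set of hyperplanes appearing in `restCompl H k S` -/
def Nset (H : Fin m → Hyp n) (k : ℕ) (S : Finset (Fin m)) : Set (Fin m) :=
  {i : Fin m | k ≤ (i : ℕ) ∧ (interA H S ∩ (H i).carrier).Nonempty ∧
      interA H S ∩ (H i).carrier ≠ interA H S}

lemma restCompl_eq (H : Fin m → Hyp n) (k : ℕ) (S : Finset (Fin m)) :
    restCompl H k S = interA H S \ ⋃ i ∈ Nset H k S, (H i).carrier := rfl

lemma mem_restCompl {H : Fin m → Hyp n} {k : ℕ} {S : Finset (Fin m)} {y : Fin n → ℝ} :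
    y ∈ restCompl H k S ↔ y ∈ interA H S ∧ ∀ i ∈ Nset H k S, ev (H i) y ≠ 0 := by
  rw [restCompl_eq]
  constructor
  · rintro ⟨h1, h2⟩
    exact ⟨h1, fun i hi h0 => h2 (Set.mem_biUnion hi (mem_carrier.2 h0))⟩
  · rintro ⟨h1, h2⟩
    refine ⟨h1, fun hmem => ?_⟩
    obtain ⟨i, hi, hci⟩ := Set.mem_iUnion₂.1 hmem
    exact h2 i hi (mem_carrier.1 hci)

lemma comp_restCompl {H : Fin m → Hyp n} {k : ℕ} {S : Finset (Fin m)} {x : Fin n → ℝ}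
    (hx : x ∈ restCompl H k S) :
    connectedComponentIn (restCompl H k S) x = sgnSet H S (Nset H k S) x := by
  rw [restCompl_eq] at hx ⊢
  exact comp_eq_sgn H S _ x hx

lemma Nset_anti {H : Fin m → Hyp n} {k k' : ℕ} (h : k ≤ k') (S : Finset (Fin m)) :
    Nset H k' S ⊆ Nset H k S := fun i hi => ⟨le_trans h hi.1, hi.2⟩

lemma restCompl_mono {H : Fin m → Hyp n} {k k' : ℕ} (h : k ≤ k') (S : Finset (Fin m)) :
    restCompl H k S ⊆ restCompl H k' S := by
  intro y hy
  rw [mem_restCompl] at hy ⊢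
  exact ⟨hy.1, fun i hi => hy.2 i (Nset_anti h S hi)⟩

lemma mem_Ak {m k : ℕ} {i : Fin m} : i ∈ Ak m k ↔ (i : ℕ) < k := by
  simp [Ak]

lemma Nset_pred {H : Fin m → Hyp n} {k : ℕ} {S : Finset (Fin m)} {e : Fin m}
    (he : (e : ℕ) + 1 = k) {i : Fin m} :
    i ∈ Nset H (k - 1) S ↔ i ∈ Nset H k S ∨ (i = e ∧ e ∈ Nset H (k - 1) S) := by
  constructor
  · intro hi
    by_cases hik : k ≤ (i : ℕ)
    · exact Or.inl ⟨hik, hi.2⟩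
    · have : (i : ℕ) = (e : ℕ) := by have := hi.1; omega
      have hie : i = e := Fin.ext this
      exact Or.inr ⟨hie, hie ▸ hi⟩
  · rintro (hi | ⟨rfl, hi⟩)
    · exact Nset_anti (by omega) S hi
    · exact hi

lemma Nset_eq_of_not_mem {H : Fin m → Hyp n} {k : ℕ} {S : Finset (Fin m)} {e : Fin m}
    (he : (e : ℕ) + 1 = k) (hen : e ∉ Nset H (k - 1) S) :
    Nset H (k - 1) S = Nset H k S := by
  ext i
  constructor
  · intro hi
    rcases (Nset_pred he).1 hi with h | ⟨rfl, h⟩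
    · exact h
    · exact absurd h hen
  · exact fun hi => Nset_anti (by omega) S hi

lemma sgn_pred {H : Fin m → Hyp n} {k : ℕ} {S : Finset (Fin m)} {e : Fin m}
    (he : (e : ℕ) + 1 = k) (hen : e ∈ Nset H (k - 1) S) (x : Fin n → ℝ) :
    sgnSet H S (Nset H (k - 1) S) x
      = sgnSet H S (Nset H k S) x ∩ {y | 0 < ev (H e) x * ev (H e) y} := by
  ext y
  constructor
  · intro hy
    exact ⟨⟨hy.1, fun i hi => hy.2 i (Nset_anti (by omega) S hi)⟩, hy.2 e hen⟩
  · rintro ⟨hy, hye⟩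
    refine ⟨hy.1, fun i hi => ?_⟩
    rcases (Nset_pred he).1 hi with h | ⟨rfl, h⟩
    · exact hy.2 i h
    · exact hye

lemma Nset_insert_subset {H : Fin m → Hyp n} {k : ℕ} {S : Finset (Fin m)} {e : Fin m} :
    Nset H k (insert e S) ⊆ Nset H k S := by
  rintro i ⟨hik, ⟨y, hy⟩, hne⟩
  have hWV : interA H (insert e S) ⊆ interA H S := interA_anti (Finset.subset_insert e S)
  refine ⟨hik, ⟨y, hWV hy.1, hy.2⟩, fun hEq => hne ?_⟩
  have hsub : interA H S ⊆ (H i).carrier := by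
    rw [← Set.inter_eq_left]; exact hEq
  apply Set.inter_eq_left.2
  exact fun w hw => hsub (hWV hw)

/-- the key slicing identity: intersecting the sign region of `z` (on the ambient
`interA S`) with `carrier e` gives the sign region of `z` in `interA (insert e S)`. -/
lemma slice_eq {H : Fin m → Hyp n} {k : ℕ} {S : Finset (Fin m)} {e : Fin m}
    {z : Fin n → ℝ} (hzV : z ∈ interA H S) (hze : ev (H e) z = 0)
    (hzN : ∀ i ∈ Nset H k S, ev (H i) z ≠ 0) :
    sgnSet H S (Nset H k S) z ∩ (H e).carrier
      = sgnSet H (insert e S) (Nset H k (insert e S)) z := by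
  have hzW : z ∈ interA H (insert e S) := by
    rw [interA_insert]; exact ⟨mem_carrier.2 hze, hzV⟩
  ext y
  constructor
  · rintro ⟨hy, hyc⟩
    refine ⟨?_, fun i hi => hy.2 i (Nset_insert_subset hi)⟩
    rw [interA_insert]; exact ⟨hyc, hy.1⟩
  · intro hy
    have hyW := hy.1
    rw [interA_insert] at hyW
    refine ⟨⟨hyW.2, fun i hi => ?_⟩, hyW.1⟩
    by_cases hiW : i ∈ Nset H k (insert e S)
    · exact hy.2 i hiW
    · -- i fails one of the conditions relative to `insert e S`
      have hik : k ≤ (i : ℕ) := hi.1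
      by_cases hne : (interA H (insert e S) ∩ (H i).carrier).Nonempty
      · -- then W ⊆ carrier i, contradicting `hzN`
        have hEq : interA H (insert e S) ∩ (H i).carrier = interA H (insert e S) := by
          by_contra hc
          exact hiW ⟨hik, hne, hc⟩
        have hsub : interA H (insert e S) ⊆ (H i).carrier := by
          rw [← Set.inter_eq_left]; exact hEq
        exact absurd (mem_carrier.1 (hsub hzW)) (hzN i hi)
      · -- carrier i misses W entirely: constant sign on W
        have hav : ∀ w ∈ interA H (insert e S), ev (H i) w ≠ 0 := by
          intro w hw h0
          exact hne ⟨w, hw, mem_carrier.2 h0⟩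
        exact sign_const (convex_interA H (insert e S)).isPreconnected hav hzW hy.1

/-- a point of `interA S` avoiding all hyperplanes of `Nset H k S` avoids *all*
hyperplanes of index `≥ k`, provided `S` is NBC with indices `< k`. -/
lemma z_avoid {H : Fin m → Hyp n} {k : ℕ} {S : Finset (Fin m)} (hnbc : IsAffNBC H S)
    (hidx : ∀ i ∈ S, (i : ℕ) < k) {z : Fin n → ℝ} (hz : z ∈ interA H S)
    (hzN : ∀ i ∈ Nset H k S, ev (H i) z ≠ 0) :
    ∀ j : Fin m, k ≤ (j : ℕ) → z ∉ (H j).carrier := by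
  intro j hj hcar
  by_cases hjN : j ∈ Nset H k S
  · exact hzN j hjN (mem_carrier.1 hcar)
  · have hne : (interA H S ∩ (H j).carrier).Nonempty := ⟨z, hz, hcar⟩
    have hEq : interA H S ∩ (H j).carrier = interA H S := by
      by_contra hc
      exact hjN ⟨hj, hne, hc⟩
    have hsub : interA H S ⊆ (H j).carrier := by
      rw [← Set.inter_eq_left]; exact hEq
    exact nbc_no_sub hnbc (fun i hi => lt_of_lt_of_le (hidx i hi) hj) hsub

lemma line_mem_interA {H : Fin m → Hyp n} {S : Finset (Fin m)} {z w : Fin n → ℝ}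
    (hz : z ∈ interA H S) (hw : w ∈ interA H S) (t : ℝ) :
    z + t • (w - z) ∈ interA H S := by
  rw [mem_interA] at *
  intro i hi
  rw [ev_line, hz i hi, hw i hi]
  ring

/-- perturbation: move from a point `z` of the carrier of `e` slightly to the chosen
side of `e`, preserving the signs on `J`. -/
lemma perturb {H : Fin m → Hyp n} {S : Finset (Fin m)} {z w : Fin n → ℝ}
    (hz : z ∈ interA H S) (hw : w ∈ interA H S) {J : Set (Fin m)}
    (hJ : ∀ i ∈ J, ev (H i) z ≠ 0) {e : Fin m} (hze : ev (H e) z = 0)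
    (hwe : ev (H e) w ≠ 0) (r : ℝ) (hr : r ≠ 0) :
    ∃ x ∈ interA H S, (∀ i ∈ J, 0 < ev (H i) z * ev (H i) x) ∧ 0 < r * ev (H e) x := by
  have hev : ∀ (i : Fin m) (t : ℝ), ev (H i) (z + t • (w - z))
      = ev (H i) z + t * (ev (H i) w - ev (H i) z) := fun i t => ev_line (H i) z w t
  have hcont : ∀ i ∈ J, ∀ᶠ t in nhds (0 : ℝ),
      0 < ev (H i) z * ev (H i) (z + t • (w - z)) := by
    intro i hi
    have hc : Continuous fun t : ℝ =>
        ev (H i) z * (ev (H i) z + t * (ev (H i) w - ev (H i) z)) := by fun_prop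
    have h0 : 0 < ev (H i) z * (ev (H i) z + (0 : ℝ) * (ev (H i) w - ev (H i) z)) := by
      have := hJ i hi
      rcases this.lt_or_gt with h | h <;> nlinarith
    have := (hc.tendsto 0).eventually (eventually_gt_nhds h0)
    filter_upwards [this] with t ht
    rw [hev i t]
    exact ht
  have hall : ∀ᶠ t in nhds (0 : ℝ), ∀ i ∈ J,
      0 < ev (H i) z * ev (H i) (z + t • (w - z)) :=
    (Filter.eventually_all_finite (Set.toFinite J)).2 hcont
  obtain ⟨ε, hε, hball⟩ := Metric.eventually_nhds_iff.1 hall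
  set u := r * ev (H e) w with hu
  have hu0 : u ≠ 0 := mul_ne_zero hr hwe
  set t := (ε / 2) * Real.sign u with ht
  have hsign : Real.sign u * u = |u| := by
    rcases hu0.lt_or_gt with h | h
    · rw [Real.sign_of_neg h, abs_of_neg h]; ring
    · rw [Real.sign_of_pos h, abs_of_pos h]; ring
  have htabs : |t| = ε / 2 := by
    rw [ht, abs_mul]
    rcases hu0.lt_or_gt with h | h
    · rw [Real.sign_of_neg h]
      rw [abs_of_pos (by linarith : (0:ℝ) < ε / 2)]
      norm_num
    · rw [Real.sign_of_pos h]
      rw [abs_of_pos (by linarith : (0:ℝ) < ε / 2)]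
      norm_num
  refine ⟨z + t • (w - z), line_mem_interA hz hw t, ?_, ?_⟩
  · apply hball
    rw [Real.dist_eq, sub_zero, htabs]
    linarith
  · rw [hev e t, hze, zero_add, mul_comm t, ← mul_assoc, sub_zero]
    have : r * ev (H e) w * t = (ε / 2) * (Real.sign u * u) := by
      rw [ht, hu]; ring
    rw [this, hsign]
    have : 0 < |u| := abs_pos.2 hu0
    positivity

/-- IVT: a convex set containing points on both sides of a hyperplane meets it. -/
lemma ivt_zero {C : Set (Fin n → ℝ)} (hC : Convex ℝ C) {e : Hyp n} {x z₀ : Fin n → ℝ}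
    (hx : x ∈ C) (hz₀ : z₀ ∈ C) (hpos : 0 < ev e x) (hneg : ev e z₀ < 0) :
    ∃ z ∈ C, ev e z = 0 := by
  have hcont : ContinuousOn (fun t : ℝ => ev e (x + t • (z₀ - x))) (Icc 0 1) := by
    have : Continuous fun t : ℝ => ev e x + t * (ev e z₀ - ev e x) := by fun_prop
    have heq : (fun t : ℝ => ev e (x + t • (z₀ - x)))
        = fun t : ℝ => ev e x + t * (ev e z₀ - ev e x) := by
      funext t; exact ev_line e x z₀ t
    rw [heq]
    exact this.continuousOn
  have h0 : (0:ℝ) ∈ Icc (ev e (x + (1:ℝ) • (z₀ - x))) (ev e (x + (0:ℝ) • (z₀ - x))) := by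
    rw [ev_line, ev_line]
    constructor <;> [skip; skip] <;> · simp; nlinarith
  obtain ⟨t, hts, htv⟩ := intermediate_value_Icc' (by norm_num : (0:ℝ) ≤ 1) hcont h0
  refine ⟨x + t • (z₀ - x), ?_, htv⟩
  have hmem : x + t • (z₀ - x) = (1 - t) • x + t • z₀ := by
    funext i
    simp only [Pi.add_apply, Pi.smul_apply, Pi.sub_apply, smul_eq_mul]
    ring
  rw [hmem]
  exact hC hx hz₀ (by linarith [hts.1, hts.2]) hts.1 (by ring)

/-- dichotomy: a region at level `k-1` has constant sign w.r.t. hyperplane `e`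
of index `k-1`. -/
lemma sign_dichotomy {H : Fin m → Hyp n} {k : ℕ} {S : Finset (Fin m)} {e : Fin m}
    (he : (e : ℕ) + 1 = k) (hVe : ¬ interA H S ⊆ (H e).carrier) {x : Fin n → ℝ}
    (hx : x ∈ restCompl H (k - 1) S) :
    ev (H e) x ≠ 0 ∧ ∀ y ∈ connectedComponentIn (restCompl H (k - 1) S) x,
      0 < ev (H e) x * ev (H e) y := by
  by_cases hne : (interA H S ∩ (H e).carrier).Nonempty
  · have hen : e ∈ Nset H (k - 1) S := by
      refine ⟨by omega, hne, fun hEq => hVe ?_⟩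
      rw [← Set.inter_eq_left]; exact hEq
    have hav : ∀ y ∈ connectedComponentIn (restCompl H (k - 1) S) x, ev (H e) y ≠ 0 :=
      fun y hy => (mem_restCompl.1 (connectedComponentIn_subset _ _ hy)).2 e hen
    exact ⟨hav x (mem_connectedComponentIn hx), fun y hy =>
      sign_const isPreconnected_connectedComponentIn hav (mem_connectedComponentIn hx) hy⟩
  · have hav : ∀ y ∈ interA H S, ev (H e) y ≠ 0 := fun y hy h0 =>
      hne ⟨y, hy, mem_carrier.2 h0⟩
    have hxV : x ∈ interA H S := (mem_restCompl.1 hx).1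
    refine ⟨hav x hxV, fun y hy => sign_const (convex_interA H S).isPreconnected hav hxV ?_⟩
    exact (mem_restCompl.1 (connectedComponentIn_subset _ _ hy)).1

end NBCaux

open NBCaux in
/-- **Well-definedness and bijectivity of `φ_k`**: every `(ℬ, Δ) ∈ ℬ_{k−1}` is contained
in a unique region `Δ′` of `𝒜_kᶜ/ℬ` (namely `compIn (restCompl H k ℬ) Δ`), satisfies
exactly one of the three conditions in the definition of `φ_k`, and `φ_k` is a bijection
from `ℬ_{k−1}` onto `ℬ_k`. -/
theorem stmt_13 (n m : ℕ) (H : Fin m → Hyp n)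
    (hinj : Function.Injective fun i => (H i).carrier)
    (k : ℕ) (hk1 : 1 ≤ k) (hkm : k ≤ m) :
    (∀ p ∈ BFam H (k - 1),
      ((∃! D, IsRegionIn (restCompl H k p.1) D ∧ p.2 ⊆ D) ∧
        IsRegionIn (restCompl H k p.1) (compIn (restCompl H k p.1) p.2) ∧
        p.2 ⊆ compIn (restCompl H k p.1) p.2) ∧
      (((p.2 ⊆ (H ⟨k - 1, by omega⟩).pos ∧ p.2 ≠ compIn (restCompl H k p.1) p.2) ∨
        (p.2 ⊆ (H ⟨k - 1, by omega⟩).pos ∧ p.2 = compIn (restCompl H k p.1) p.2) ∨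
        p.2 ⊆ (H ⟨k - 1, by omega⟩).neg) ∧
       ¬((p.2 ⊆ (H ⟨k - 1, by omega⟩).pos ∧ p.2 ≠ compIn (restCompl H k p.1) p.2) ∧
         (p.2 ⊆ (H ⟨k - 1, by omega⟩).pos ∧ p.2 = compIn (restCompl H k p.1) p.2)) ∧
       ¬((p.2 ⊆ (H ⟨k - 1, by omega⟩).pos ∧ p.2 ≠ compIn (restCompl H k p.1) p.2) ∧
         p.2 ⊆ (H ⟨k - 1, by omega⟩).neg) ∧
       ¬((p.2 ⊆ (H ⟨k - 1, by omega⟩).pos ∧ p.2 = compIn (restCompl H k p.1) p.2) ∧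
         p.2 ⊆ (H ⟨k - 1, by omega⟩).neg))) ∧
    Set.BijOn (phi H k ⟨k - 1, by omega⟩) (BFam H (k - 1)) (BFam H k) := by
  classical
  set e : Fin m := ⟨k - 1, by omega⟩ with hedef
  have heval : (e : ℕ) = k - 1 := rfl
  have hev : (e : ℕ) + 1 = k := by omega
  have hkk : k - 1 ≤ k := by omega
  -- e is not in any subset of `Ak m (k-1)`
  have he_not : ∀ S : Finset (Fin m), S ⊆ Ak m (k - 1) → e ∉ S := by
    intro S hS h
    have := mem_Ak.1 (hS h)
    omega
  have hAkmono : Ak m (k - 1) ⊆ Ak m k := by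
    intro i hi
    have := mem_Ak.1 hi
    exact mem_Ak.2 (by omega)
  -- `compIn` at level k of a region at level k-1
  have hcompIn' : ∀ (S : Finset (Fin m)) (x : Fin n → ℝ), x ∈ restCompl H (k - 1) S →
      compIn (restCompl H k S) (connectedComponentIn (restCompl H (k - 1) S) x)
        = connectedComponentIn (restCompl H k S) x := by
    intro S x hx
    exact compIn_eq isPreconnected_connectedComponentIn (mem_connectedComponentIn hx)
      ((connectedComponentIn_subset _ _).trans (restCompl_mono hkk S))
  -- description of level-(k-1) regions in terms of level-k regions
  have hΔdesc : ∀ (S : Finset (Fin m)) (x : Fin n → ℝ), x ∈ restCompl H (k - 1) S →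
      (e ∈ Nset H (k - 1) S ∧ connectedComponentIn (restCompl H (k - 1) S) x
        = connectedComponentIn (restCompl H k S) x ∩ {y | 0 < ev (H e) x * ev (H e) y})
      ∨ (e ∉ Nset H (k - 1) S ∧ connectedComponentIn (restCompl H (k - 1) S) x
        = connectedComponentIn (restCompl H k S) x) := by
    intro S x hx
    by_cases hen : e ∈ Nset H (k - 1) S
    · left
      refine ⟨hen, ?_⟩
      rw [comp_restCompl hx, comp_restCompl (restCompl_mono hkk S hx), sgn_pred hev hen]
    · right
      refine ⟨hen, ?_⟩
      have hUeq : restCompl H (k - 1) S = restCompl H k S := by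
        rw [restCompl_eq, restCompl_eq, Nset_eq_of_not_mem hev hen]
      rw [hUeq]
  have hsetpos : ∀ x : Fin n → ℝ, 0 < ev (H e) x →
      {y | 0 < ev (H e) x * ev (H e) y} = {y | 0 < ev (H e) y} := by
    intro x hx
    ext y
    simp only [Set.mem_setOf_eq]
    constructor <;> intro h <;> nlinarith
  have hsetneg : ∀ x : Fin n → ℝ, ev (H e) x < 0 →
      {y | 0 < ev (H e) x * ev (H e) y} = {y | ev (H e) y < 0} := by
    intro x hx
    ext y
    simp only [Set.mem_setOf_eq]
    constructor <;> intro h <;> nlinarith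
  -- sign trichotomy for regions of members of BFam (k-1)
  have tri : ∀ (S : Finset (Fin m)) (x : Fin n → ℝ), S ⊆ Ak m (k - 1) → IsAffNBC H S →
      x ∈ restCompl H (k - 1) S →
      (connectedComponentIn (restCompl H (k - 1) S) x ⊆ (H e).pos ∧ 0 < ev (H e) x) ∨
      (connectedComponentIn (restCompl H (k - 1) S) x ⊆ (H e).neg ∧ ev (H e) x < 0) := by
    intro S x hS hnbc hx
    have hVe : ¬ interA H S ⊆ (H e).carrier := by
      apply nbc_no_sub hnbc
      intro i hi
      have := mem_Ak.1 (hS hi)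
      omega
    obtain ⟨hex, hsgn⟩ := sign_dichotomy hev hVe hx
    rcases hex.lt_or_gt with hlt | hgt
    · right
      refine ⟨fun y hy => ?_, hlt⟩
      rw [NBCaux.mem_neg]
      nlinarith [hsgn y hy]
    · left
      refine ⟨fun y hy => ?_, hgt⟩
      rw [NBCaux.mem_pos]
      nlinarith [hsgn y hy]
  -- the big case-A bundle
  have caseA : ∀ (S : Finset (Fin m)) (x : Fin n → ℝ), S ⊆ Ak m (k - 1) → IsAffNBC H S →
      ∀ hx : x ∈ restCompl H (k - 1) S,
      0 < ev (H e) x →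
      connectedComponentIn (restCompl H (k - 1) S) x
        ≠ connectedComponentIn (restCompl H k S) x →
      ∃ z, z ∈ restCompl H k (insert e S) ∧ ev (H e) z = 0 ∧
        z ∈ connectedComponentIn (restCompl H k S) x ∧
        IsAffNBC H (insert e S) ∧
        connectedComponentIn (restCompl H k S) x ∩ (H e).carrier
          = connectedComponentIn (restCompl H k (insert e S)) z := by
    intro S x hS hnbc hx hexpos hneq
    have hxU : x ∈ restCompl H k S := restCompl_mono hkk S hx
    have hen : e ∈ Nset H (k - 1) S := by
      rcases hΔdesc S x hx with ⟨hen, _⟩ | ⟨hen, hEq⟩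
      · exact hen
      · exact absurd hEq hneq
    -- find a point z of `comp U x` on the carrier of e
    have hΔeq : connectedComponentIn (restCompl H (k - 1) S) x
        = connectedComponentIn (restCompl H k S) x ∩ {y | 0 < ev (H e) x * ev (H e) y} :=
      ((hΔdesc S x hx).resolve_right (fun h => h.1 hen)).2
    have hconv : Convex ℝ (connectedComponentIn (restCompl H k S) x) := by
      rw [comp_restCompl hxU]
      exact convex_sgnSet H S _ x
    have hz : ∃ z ∈ connectedComponentIn (restCompl H k S) x, ev (H e) z = 0 := by
      have hssub : connectedComponentIn (restCompl H (k - 1) S) x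
          ⊆ connectedComponentIn (restCompl H k S) x := by
        rw [hΔeq]; exact Set.inter_subset_left
      obtain ⟨z₀, hz₀U, hz₀Δ⟩ := Set.exists_of_ssubset (hssub.ssubset_of_ne hneq)
      by_cases hz₀e : ev (H e) z₀ = 0
      · exact ⟨z₀, hz₀U, hz₀e⟩
      · have hz₀neg : ev (H e) z₀ < 0 := by
          rcases lt_or_gt_of_ne hz₀e with h | h
          · exact h
          · exfalso
            apply hz₀Δ
            rw [hΔeq]
            exact ⟨hz₀U, by simp only [Set.mem_setOf_eq]; positivity⟩
        exact ivt_zero hconv (mem_connectedComponentIn hxU) hz₀U hexpos hz₀neg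
    obtain ⟨z, hzC, hze⟩ := hz
    have hzU : z ∈ restCompl H k S := connectedComponentIn_subset _ _ hzC
    have hzV : z ∈ interA H S := (mem_restCompl.1 hzU).1
    have hzN : ∀ i ∈ Nset H k S, ev (H i) z ≠ 0 := (mem_restCompl.1 hzU).2
    have hidx : ∀ i ∈ S, (i : ℕ) < k := by
      intro i hi
      have := mem_Ak.1 (hS hi)
      omega
    have hzavoid := z_avoid hnbc hidx hzV hzN
    have hnbc' : IsAffNBC H (insert e S) := by
      apply nbc_insert hnbc hzV (mem_carrier.2 hze)
      intro j hj
      exact hzavoid j (by omega)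
    have hzW : z ∈ restCompl H k (insert e S) := by
      rw [mem_restCompl]
      refine ⟨?_, fun i hi => hzN i (Nset_insert_subset hi)⟩
      rw [interA_insert]
      exact ⟨mem_carrier.2 hze, hzV⟩
    refine ⟨z, hzW, hze, hzC, hnbc', ?_⟩
    have h1 : connectedComponentIn (restCompl H k S) x
        = connectedComponentIn (restCompl H k S) z := connectedComponentIn_eq hzC
    rw [h1, comp_restCompl hzU, comp_restCompl hzW]
    exact slice_eq hzV hze hzN
  -- ### Parts 1 and 2
  have part12 : ∀ p ∈ BFam H (k - 1),
      ((∃! D, IsRegionIn (restCompl H k p.1) D ∧ p.2 ⊆ D) ∧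
        IsRegionIn (restCompl H k p.1) (compIn (restCompl H k p.1) p.2) ∧
        p.2 ⊆ compIn (restCompl H k p.1) p.2) ∧
      (((p.2 ⊆ (H e).pos ∧ p.2 ≠ compIn (restCompl H k p.1) p.2) ∨
        (p.2 ⊆ (H e).pos ∧ p.2 = compIn (restCompl H k p.1) p.2) ∨
        p.2 ⊆ (H e).neg) ∧
       ¬((p.2 ⊆ (H e).pos ∧ p.2 ≠ compIn (restCompl H k p.1) p.2) ∧
         (p.2 ⊆ (H e).pos ∧ p.2 = compIn (restCompl H k p.1) p.2)) ∧
       ¬((p.2 ⊆ (H e).pos ∧ p.2 ≠ compIn (restCompl H k p.1) p.2) ∧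
         p.2 ⊆ (H e).neg) ∧
       ¬((p.2 ⊆ (H e).pos ∧ p.2 = compIn (restCompl H k p.1) p.2) ∧
         p.2 ⊆ (H e).neg)) := by
    rintro ⟨S, Δ⟩ ⟨hS, hnbc, x, hxU', hΔdef⟩
    dsimp only at hS hnbc hxU' hΔdef ⊢
    subst hΔdef
    have hxU : x ∈ restCompl H k S := restCompl_mono hkk S hxU'
    have hxΔ : x ∈ connectedComponentIn (restCompl H (k - 1) S) x :=
      mem_connectedComponentIn hxU'
    have hΔU : connectedComponentIn (restCompl H (k - 1) S) x ⊆ restCompl H k S :=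
      (connectedComponentIn_subset _ _).trans (restCompl_mono hkk S)
    have hsub : connectedComponentIn (restCompl H (k - 1) S) x
        ⊆ connectedComponentIn (restCompl H k S) x :=
      isPreconnected_connectedComponentIn.subset_connectedComponentIn hxΔ hΔU
    have hci := hcompIn' S x hxU'
    constructor
    · refine ⟨⟨connectedComponentIn (restCompl H k S) x, ⟨⟨x, hxU, rfl⟩, hsub⟩, ?_⟩, ?_, ?_⟩
      · rintro D ⟨⟨y, hyU, rfl⟩, hD⟩
        exact connectedComponentIn_eq (hD hxΔ)
      · rw [hci]
        exact ⟨x, hxU, rfl⟩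
      · rw [hci]
        exact hsub
    · have hnotboth : ¬ (connectedComponentIn (restCompl H (k - 1) S) x ⊆ (H e).pos ∧
          connectedComponentIn (restCompl H (k - 1) S) x ⊆ (H e).neg) := by
        rintro ⟨h1, h2⟩
        have hp := NBCaux.mem_pos.1 (h1 hxΔ)
        have hn := NBCaux.mem_neg.1 (h2 hxΔ)
        linarith
      refine ⟨?_, ?_, ?_, ?_⟩
      · rcases tri S x hS hnbc hxU' with ⟨hp, _⟩ | ⟨hn, _⟩
        · by_cases heq : connectedComponentIn (restCompl H (k - 1) S) x
              = compIn (restCompl H k S) (connectedComponentIn (restCompl H (k - 1) S) x)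
          · exact Or.inr (Or.inl ⟨hp, heq⟩)
          · exact Or.inl ⟨hp, heq⟩
        · exact Or.inr (Or.inr hn)
      · rintro ⟨⟨_, hne⟩, ⟨_, heq⟩⟩
        exact hne heq
      · rintro ⟨⟨hp, _⟩, hn⟩
        exact hnotboth ⟨hp, hn⟩
      · rintro ⟨⟨hp, _⟩, hn⟩
        exact hnotboth ⟨hp, hn⟩
  have phival : ∀ (S : Finset (Fin m)) (x : Fin n → ℝ), S ⊆ Ak m (k - 1) → IsAffNBC H S →
      ∀ _ : x ∈ restCompl H (k - 1) S,
      (0 < ev (H e) x ∧ connectedComponentIn (restCompl H (k - 1) S) x ⊆ (H e).pos ∧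
        connectedComponentIn (restCompl H (k - 1) S) x
          ≠ connectedComponentIn (restCompl H k S) x ∧
        phi H k e (S, connectedComponentIn (restCompl H (k - 1) S) x)
          = (insert e S, connectedComponentIn (restCompl H k S) x ∩ (H e).carrier)) ∨
      (0 < ev (H e) x ∧ connectedComponentIn (restCompl H (k - 1) S) x ⊆ (H e).pos ∧
        connectedComponentIn (restCompl H (k - 1) S) x
          = connectedComponentIn (restCompl H k S) x ∧
        phi H k e (S, connectedComponentIn (restCompl H (k - 1) S) x)
          = (S, connectedComponentIn (restCompl H (k - 1) S) x)) ∨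
      (ev (H e) x < 0 ∧ connectedComponentIn (restCompl H (k - 1) S) x ⊆ (H e).neg ∧
        phi H k e (S, connectedComponentIn (restCompl H (k - 1) S) x)
          = (S, connectedComponentIn (restCompl H k S) x)) := by
    intro S x hS hnbc hx
    have hci := hcompIn' S x hx
    have hxmem : x ∈ connectedComponentIn (restCompl H (k - 1) S) x :=
      mem_connectedComponentIn hx
    rcases tri S x hS hnbc hx with ⟨hpos, hex⟩ | ⟨hneg, hex⟩
    · by_cases heqc : connectedComponentIn (restCompl H (k - 1) S) x
          = connectedComponentIn (restCompl H k S) x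
      · refine Or.inr (Or.inl ⟨hex, hpos, heqc, ?_⟩)
        have hxp := NBCaux.mem_pos.1 (hpos hxmem)
        simp only [phi]
        split_ifs with h1 h2 h3
        · exact absurd (heqc.trans hci.symm) h1.2
        · rfl
        · exfalso
          have := NBCaux.mem_neg.1 (h3 hxmem)
          linarith
        · rfl
      · refine Or.inl ⟨hex, hpos, heqc, ?_⟩
        simp only [phi]
        split_ifs with h1 h2 h3
        · rw [hci]
        · exact absurd ⟨hpos, fun h => heqc (h.trans hci)⟩ h1
        · exact absurd ⟨hpos, fun h => heqc (h.trans hci)⟩ h1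
        · exact absurd ⟨hpos, fun h => heqc (h.trans hci)⟩ h1
    · have hnp : ¬ connectedComponentIn (restCompl H (k - 1) S) x ⊆ (H e).pos := by
        intro hsub
        have := NBCaux.mem_pos.1 (hsub hxmem)
        linarith
      refine Or.inr (Or.inr ⟨hex, hneg, ?_⟩)
      simp only [phi]
      split_ifs with h1 h2
      · exact absurd h1.1 hnp
      · exact absurd h2.1 hnp
      · rw [hci]
  refine ⟨fun p hp => part12 p hp, ?_, ?_, ?_⟩
  · -- MapsTo
    rintro ⟨S, Δ⟩ hp
    obtain ⟨hS, hnbc, x, hxU', hΔdef⟩ := hp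
    dsimp only at hS hnbc hxU' hΔdef
    subst hΔdef
    have hxU : x ∈ restCompl H k S := restCompl_mono hkk S hxU'
    have hci := hcompIn' S x hxU'
    simp only [phi]
    split_ifs with h1 h2 h3
    · -- case A
      rw [hci] at h1
      obtain ⟨z, hzW, hze, hzC, hnbc', hslice⟩ :=
        caseA S x hS hnbc hxU' (by
          have := NBCaux.mem_pos.1 (h1.1 (mem_connectedComponentIn hxU'))
          exact this) h1.2
      refine ⟨?_, hnbc', z, hzW, ?_⟩
      · simp only
        intro i hi
        rcases Finset.mem_insert.1 hi with rfl | hiS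
        · exact mem_Ak.2 (by omega)
        · exact hAkmono (hS hiS)
      · simp only
        rw [hci, hslice]
    · -- case B
      exact ⟨hS.trans hAkmono, hnbc, x, hxU, by simp only; rw [h2.2, hci]⟩
    · -- case C
      exact ⟨hS.trans hAkmono, hnbc, x, hxU, by simp only; rw [hci]⟩
    · -- impossible
      exfalso
      rcases tri S x hS hnbc hxU' with ⟨hp', _⟩ | ⟨hn', _⟩
      · by_cases heq : connectedComponentIn (restCompl H (k - 1) S) x
            = compIn (restCompl H k S) (connectedComponentIn (restCompl H (k - 1) S) x)
        · exact h2 ⟨hp', heq⟩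
        · exact h1 ⟨hp', heq⟩
      · exact h3 hn'
  · -- InjOn
    rintro ⟨S₁, Δ₁⟩ hp₁ ⟨S₂, Δ₂⟩ hp₂ heq
    obtain ⟨hS₁, hnbc₁, x₁, hxU₁, hΔ₁⟩ := hp₁
    dsimp only at hS₁ hnbc₁ hxU₁ hΔ₁
    subst hΔ₁
    obtain ⟨hS₂, hnbc₂, x₂, hxU₂, hΔ₂⟩ := hp₂
    dsimp only at hS₂ hnbc₂ hxU₂ hΔ₂
    subst hΔ₂
    have hxUk₁ : x₁ ∈ restCompl H k S₁ := restCompl_mono hkk S₁ hxU₁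
    have hxUk₂ : x₂ ∈ restCompl H k S₂ := restCompl_mono hkk S₂ hxU₂
    rcases phival S₁ x₁ hS₁ hnbc₁ hxU₁ with ⟨hex₁, hpos₁, hne₁, hv₁⟩ |
        ⟨hex₁, hpos₁, heq₁, hv₁⟩ | ⟨hex₁, hneg₁, hv₁⟩ <;>
      rcases phival S₂ x₂ hS₂ hnbc₂ hxU₂ with ⟨hex₂, hpos₂, hne₂, hv₂⟩ |
        ⟨hex₂, hpos₂, heq₂, hv₂⟩ | ⟨hex₂, hneg₂, hv₂⟩ <;>
      rw [hv₁, hv₂, Prod.mk.injEq] at heq <;> obtain ⟨heqS, heqΔ⟩ := heq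
    -- A A
    · have hS12 : S₁ = S₂ := by
        rw [← Finset.erase_insert (he_not S₁ hS₁), heqS, Finset.erase_insert (he_not S₂ hS₂)]
      subst hS12
      obtain ⟨z, hzW, hze, hzC, hnbc', hslice⟩ := caseA S₁ x₁ hS₁ hnbc₁ hxU₁ hex₁ hne₁
      have hz2 : z ∈ connectedComponentIn (restCompl H k S₁) x₂ := by
        have : z ∈ connectedComponentIn (restCompl H k S₁) x₁ ∩ (H e).carrier :=
          ⟨hzC, NBCaux.mem_carrier.2 hze⟩
        rw [heqΔ] at this
        exact this.1
      have hDeq : connectedComponentIn (restCompl H k S₁) x₁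
          = connectedComponentIn (restCompl H k S₁) x₂ :=
        (connectedComponentIn_eq hzC).trans (connectedComponentIn_eq hz2).symm
      have hen₁ : e ∈ Nset H (k - 1) S₁ := by
        rcases hΔdesc S₁ x₁ hxU₁ with ⟨hen, _⟩ | ⟨_, hEq⟩
        · exact hen
        · exact absurd hEq hne₁
      have hd₁ := ((hΔdesc S₁ x₁ hxU₁).resolve_right (fun h => h.1 hen₁)).2
      have hd₂ := ((hΔdesc S₁ x₂ hxU₂).resolve_right (fun h => h.1 hen₁)).2
      rw [Prod.mk.injEq]
      refine ⟨rfl, ?_⟩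
      rw [hd₁, hd₂, hsetpos x₁ hex₁, hsetpos x₂ hex₂, hDeq]
    -- A B
    · exact absurd (heqS ▸ Finset.mem_insert_self e S₁) (he_not S₂ hS₂)
    -- A C
    · exact absurd (heqS ▸ Finset.mem_insert_self e S₁) (he_not S₂ hS₂)
    -- B A
    · exact absurd (heqS.symm ▸ Finset.mem_insert_self e S₂) (he_not S₁ hS₁)
    -- B B
    · rw [Prod.mk.injEq]
      exact ⟨heqS, heqΔ⟩
    -- B C
    · exfalso
      subst heqS
      have hx₂mem : x₂ ∈ connectedComponentIn (restCompl H (k - 1) S₁) x₁ := by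
        rw [heqΔ]
        exact mem_connectedComponentIn hxUk₂
      have := NBCaux.mem_pos.1 (hpos₁ hx₂mem)
      linarith
    -- C A
    · exact absurd (heqS.symm ▸ Finset.mem_insert_self e S₂) (he_not S₁ hS₁)
    -- C B
    · exfalso
      subst heqS
      have hx₁mem : x₁ ∈ connectedComponentIn (restCompl H (k - 1) S₁) x₂ := by
        rw [← heqΔ]
        exact mem_connectedComponentIn hxUk₁
      have := NBCaux.mem_pos.1 (hpos₂ hx₁mem)
      linarith
    -- C C
    · subst heqS
      rw [Prod.mk.injEq]
      refine ⟨rfl, ?_⟩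
      rcases hΔdesc S₁ x₁ hxU₁ with ⟨hen₁, hd₁⟩ | ⟨hen₁, hd₁⟩
      · have hd₂ := ((hΔdesc S₁ x₂ hxU₂).resolve_right (fun h => h.1 hen₁)).2
        rw [hd₁, hd₂, hsetneg x₁ hex₁, hsetneg x₂ hex₂, heqΔ]
      · have hd₂ := ((hΔdesc S₁ x₂ hxU₂).resolve_left (fun h => hen₁ h.1)).2
        rw [hd₁, hd₂, heqΔ]
  · -- SurjOn
    rintro ⟨C, Γ⟩ hq
    obtain ⟨hC, hnbcC, z, hzU, hΓ⟩ := hq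
    dsimp only at hC hnbcC hzU hΓ
    subst hΓ
    have hzV : z ∈ interA H C := (mem_restCompl.1 hzU).1
    have hzN : ∀ i ∈ Nset H k C, ev (H i) z ≠ 0 := (mem_restCompl.1 hzU).2
    by_cases heC : e ∈ C
    · -- the case `e ∈ C`
      set S := C.erase e with hSdef
      have hinsert : insert e S = C := Finset.insert_erase heC
      have hS : S ⊆ Ak m (k - 1) := by
        intro i hi
        obtain ⟨hine, hiC⟩ := Finset.mem_erase.1 hi
        have h1 := mem_Ak.1 (hC hiC)
        have h2 : (i : ℕ) ≠ k - 1 := fun h => hine (Fin.ext (h.trans heval.symm))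
        exact mem_Ak.2 (by omega)
      have hnbcS : IsAffNBC H S := nbc_subset hnbcC (Finset.erase_subset e C)
      have hzS : z ∈ interA H S := interA_anti (Finset.erase_subset e C) hzV
      have hze : ev (H e) z = 0 := mem_interA.1 hzV e heC
      have hzNS : ∀ i ∈ Nset H k S, ev (H i) z ≠ 0 := by
        intro i hi h0
        have hlt : ∀ l ∈ C, (l : ℕ) < (i : ℕ) :=
          fun l hl => lt_of_lt_of_le (mem_Ak.1 (hC hl)) hi.1
        have hnsub : ¬ interA H C ⊆ (H i).carrier := nbc_no_sub hnbcC hlt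
        have hiNC : i ∈ Nset H k C :=
          ⟨hi.1, ⟨z, hzV, NBCaux.mem_carrier.2 h0⟩, fun hEq => hnsub (by
            rw [← Set.inter_eq_left]; exact hEq)⟩
        exact hzN i hiNC h0
      have hVe : ¬ interA H S ⊆ (H e).carrier := nbc_no_sub hnbcS (fun i hi => by
        have := mem_Ak.1 (hS hi); omega)
      obtain ⟨w, hwS, hwe⟩ := Set.not_subset.1 hVe
      obtain ⟨x, hxS, hxsgn, hxe⟩ := perturb hzS hwS hzNS hze
        (fun h0 => hwe (NBCaux.mem_carrier.2 h0)) 1 one_ne_zero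
      rw [one_mul] at hxe
      have hen : e ∈ Nset H (k - 1) S := ⟨by omega, ⟨z, hzS, NBCaux.mem_carrier.2 hze⟩,
        fun hEq => hVe (by rw [← Set.inter_eq_left]; exact hEq)⟩
      have hxU' : x ∈ restCompl H (k - 1) S := by
        rw [mem_restCompl]
        refine ⟨hxS, fun i hi => ?_⟩
        rcases (Nset_pred hev).1 hi with h | ⟨rfl, _⟩
        · intro h0
          have hcontra := hxsgn i h
          rw [h0, mul_zero] at hcontra
          exact lt_irrefl 0 hcontra
        · exact ne_of_gt hxe
      have hxUk : x ∈ restCompl H k S := restCompl_mono hkk S hxU'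
      have hzUk : z ∈ restCompl H k S := mem_restCompl.2 ⟨hzS, hzNS⟩
      have hzcomp : z ∈ connectedComponentIn (restCompl H k S) x := by
        rw [comp_restCompl hxUk]
        refine ⟨hzS, fun i hi => ?_⟩
        rw [mul_comm]
        exact hxsgn i hi
      have hd := ((hΔdesc S x hxU').resolve_right (fun h => h.1 hen)).2
      have hΔne : connectedComponentIn (restCompl H (k - 1) S) x
          ≠ connectedComponentIn (restCompl H k S) x := by
        intro hEq
        have hzin : z ∈ connectedComponentIn (restCompl H (k - 1) S) x := by
          rw [hEq]; exact hzcomp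
        rw [hd] at hzin
        have hcontra := hzin.2
        rw [Set.mem_setOf_eq, hze, mul_zero] at hcontra
        exact lt_irrefl 0 hcontra
      refine ⟨(S, connectedComponentIn (restCompl H (k - 1) S) x),
        ⟨hS, hnbcS, x, hxU', rfl⟩, ?_⟩
      rcases phival S x hS hnbcS hxU' with ⟨_, _, _, hv⟩ | ⟨_, _, hEq, _⟩ | ⟨hex', _, _⟩
      · rw [hv, Prod.mk.injEq]
        refine ⟨hinsert, ?_⟩
        have h1 : connectedComponentIn (restCompl H k S) x
            = connectedComponentIn (restCompl H k S) z := connectedComponentIn_eq hzcomp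
        rw [h1, comp_restCompl hzUk, slice_eq hzS hze hzNS, hinsert, ← comp_restCompl hzU]
      · exact absurd hEq hΔne
      · linarith
    · -- the case `e ∉ C`
      have hS : C ⊆ Ak m (k - 1) := by
        intro i hi
        have h1 := mem_Ak.1 (hC hi)
        have h2 : (i : ℕ) ≠ k - 1 := by
          intro h
          exact heC (by rwa [(Fin.ext (h.trans heval.symm) : i = e)] at hi)
        exact mem_Ak.2 (by omega)
      by_cases hmeets : ∃ z' ∈ connectedComponentIn (restCompl H k C) z, ev (H e) z' = 0
      · obtain ⟨z', hz'Γ, hz'e⟩ := hmeets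
        have hz'U : z' ∈ restCompl H k C := connectedComponentIn_subset _ _ hz'Γ
        have hz'V : z' ∈ interA H C := (mem_restCompl.1 hz'U).1
        have hz'N : ∀ i ∈ Nset H k C, ev (H i) z' ≠ 0 := (mem_restCompl.1 hz'U).2
        have hVe : ¬ interA H C ⊆ (H e).carrier := nbc_no_sub hnbcC (fun i hi => by
          have := mem_Ak.1 (hS hi); omega)
        obtain ⟨w, hwV, hwe⟩ := Set.not_subset.1 hVe
        obtain ⟨x, hxV, hxsgn, hxe⟩ := perturb hz'V hwV hz'N hz'e
          (fun h0 => hwe (NBCaux.mem_carrier.2 h0)) (-1) (by norm_num)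
        have hxe' : ev (H e) x < 0 := by nlinarith [hxe]
        have hxU' : x ∈ restCompl H (k - 1) C := by
          rw [mem_restCompl]
          refine ⟨hxV, fun i hi => ?_⟩
          rcases (Nset_pred hev).1 hi with h | ⟨rfl, _⟩
          · intro h0
            have hcontra := hxsgn i h
            rw [h0, mul_zero] at hcontra
            exact lt_irrefl 0 hcontra
          · exact ne_of_lt hxe'
        have hxUk : x ∈ restCompl H k C := restCompl_mono hkk C hxU'
        have hxΓ : x ∈ connectedComponentIn (restCompl H k C) z := by
          have h1 : connectedComponentIn (restCompl H k C) z
              = connectedComponentIn (restCompl H k C) z' := connectedComponentIn_eq hz'Γ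
          rw [h1, comp_restCompl hz'U]
          exact ⟨hxV, fun i hi => hxsgn i hi⟩
        have hcompeq : connectedComponentIn (restCompl H k C) x
            = connectedComponentIn (restCompl H k C) z :=
          (connectedComponentIn_eq hxΓ).symm
        refine ⟨(C, connectedComponentIn (restCompl H (k - 1) C) x),
          ⟨hS, hnbcC, x, hxU', rfl⟩, ?_⟩
        rcases phival C x hS hnbcC hxU' with ⟨hex'', _, _, _⟩ | ⟨hex'', _, _, _⟩ |
          ⟨_, _, hv⟩
        · linarith
        · linarith
        · rw [hv, Prod.mk.injEq]
          exact ⟨rfl, hcompeq⟩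
      · push_neg at hmeets
        have hzcc : z ∈ connectedComponentIn (restCompl H k C) z :=
          mem_connectedComponentIn hzU
        have hze : ev (H e) z ≠ 0 := hmeets z hzcc
        have hzU' : z ∈ restCompl H (k - 1) C := by
          rw [mem_restCompl]
          refine ⟨hzV, fun i hi => ?_⟩
          rcases (Nset_pred hev).1 hi with h | ⟨rfl, _⟩
          · exact hzN i h
          · exact hze
        have hΓeq : connectedComponentIn (restCompl H (k - 1) C) z
            = connectedComponentIn (restCompl H k C) z := by
          rcases hΔdesc C z hzU' with ⟨hen, hd⟩ | ⟨hen, hd⟩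
          · rw [hd]
            apply Set.inter_eq_left.2
            intro y hy
            exact sign_const isPreconnected_connectedComponentIn hmeets hzcc hy
          · rw [hd]
        refine ⟨(C, connectedComponentIn (restCompl H (k - 1) C) z),
          ⟨hS, hnbcC, z, hzU', rfl⟩, ?_⟩
        rcases phival C z hS hnbcC hzU' with ⟨_, _, hne', _⟩ | ⟨_, _, _, hv⟩ | ⟨_, _, hv⟩
        · exact absurd hΓeq hne'
        · rw [hv, Prod.mk.injEq]
          exact ⟨rfl, hΓeq⟩
        · rw [hv, Prod.mk.injEq]
          exact ⟨rfl, rfl⟩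
end

section
/- Let 𝒜 = {H₁, …, H_m} be a hyperplane arrangement in ℝⁿ with H_i = {x : ⟨α_i, x⟩ = b_i}, ordered by H₁ ≺ ⋯ ≺ H_m, and let its coning c𝒜 in ℝⁿ⁺¹ be ordered by cH₁ ≺ ⋯ ≺ cH_m ≺ K₀. Then for every S ⊆ {1, …, m}, the set {H_i : i ∈ S} is an affine NBC subset of 𝒜 if and only if both {cH_i : i ∈ S} and {cH_i : i ∈ S} ∪ {K₀} are affine NBC subsets of c𝒜. -/
open Set

/-- The cone `cH` of the hyperplane `H : ⟨a, x⟩ = b`: the linear hyperplane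
`{(x, t) : ⟨a, x⟩ = b·t}` in `ℝⁿ⁺¹`. -/
def coneHyp {n : ℕ} (H : Hyp n) : Hyp (n + 1) where
  a := Fin.snoc H.a (-H.b)
  b := 0
  ha := by
    intro h
    apply H.ha
    funext j
    have := congrFun h (Fin.castSucc j)
    simpa using this

/-- The extra hyperplane `K₀ : t = 0` of the coning. -/
def K0 (n : ℕ) : Hyp (n + 1) where
  a := Fin.snoc 0 1
  b := 0
  ha := by
    intro h
    have := congrFun h (Fin.last n)
    simp at this

/-- The coning `c𝒜` of the arrangement `𝒜 = {H₁, …, H_m}` in `ℝⁿ`: the arrangement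
`{cH₁, …, cH_m, K₀}` in `ℝⁿ⁺¹`, with `K₀` listed last. -/
def coneArr {n m : ℕ} (H : Fin m → Hyp n) : Fin (m + 1) → Hyp (n + 1) :=
  Fin.snoc (fun i => coneHyp (H i)) (K0 n)


/-! ### Auxiliary development -/

section AuxNBCDev

open Module Submodule

noncomputable section

/-! #### Abstract rank/circuit lemmas -/

variable {ι E : Type*} [DecidableEq ι] [AddCommGroup E] [Module ℝ E] [FiniteDimensional ℝ E]

/-- Rank of the span of a finite subfamily. -/
noncomputable def auxRk (Φ : ι → E) (T : Finset ι) : ℕ :=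
  Module.finrank ℝ (Submodule.span ℝ (Φ '' ↑T))

lemma auxRk_def (Φ : ι → E) (T : Finset ι) :
    auxRk Φ T = Module.finrank ℝ (Submodule.span ℝ (Φ '' ↑T)) := rfl

lemma auxRk_mono (Φ : ι → E) {T T' : Finset ι} (h : T ⊆ T') : auxRk Φ T ≤ auxRk Φ T' :=
  Submodule.finrank_mono (Submodule.span_mono (Set.image_mono (Finset.coe_subset.mpr h)))

lemma auxRk_le_card (Φ : ι → E) (T : Finset ι) : auxRk Φ T ≤ T.card := by
  classical
  have h1 : (Φ '' ↑T) = ↑(T.image Φ) := (Finset.coe_image).symm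
  have h2 := finrank_span_finset_le_card (R := ℝ) (T.image Φ)
  rw [Set.finrank] at h2
  calc auxRk Φ T = Module.finrank ℝ (Submodule.span ℝ (↑(T.image Φ) : Set E)) := by
        rw [auxRk_def, h1]
    _ ≤ (T.image Φ).card := h2
    _ ≤ T.card := Finset.card_image_le

lemma auxImage_coe_insert (Φ : ι → E) {T : Finset ι} {x : ι} (hx : x ∈ T) :
    Φ '' ↑T = insert (Φ x) (Φ '' ↑(T.erase x)) := by
  rw [← Set.image_insert_eq, ← Finset.coe_insert, Finset.insert_erase hx]

lemma auxFinrank_span_singleton_le (v : E) : Module.finrank ℝ (ℝ ∙ v) ≤ 1 := by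
  rcases eq_or_ne v 0 with rfl | hv
  · rw [Submodule.span_zero_singleton]
    simp
  · exact le_of_eq (finrank_span_singleton hv)

lemma auxRk_le_erase_add_one (Φ : ι → E) {T : Finset ι} {x : ι} (hx : x ∈ T) :
    auxRk Φ T ≤ auxRk Φ (T.erase x) + 1 := by
  rw [auxRk_def, auxImage_coe_insert Φ hx, Submodule.span_insert]
  calc Module.finrank ℝ ((ℝ ∙ Φ x) ⊔ Submodule.span ℝ (Φ '' ↑(T.erase x)) : Submodule ℝ E)
      ≤ Module.finrank ℝ (ℝ ∙ Φ x) + Module.finrank ℝ (Submodule.span ℝ (Φ '' ↑(T.erase x))) :=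
        Submodule.finrank_add_le_finrank_add_finrank _ _
    _ ≤ 1 + auxRk Φ (T.erase x) := by
        have := auxFinrank_span_singleton_le (Φ x); rw [auxRk_def]; omega
    _ = auxRk Φ (T.erase x) + 1 := by omega

/-- A circuit: minimal dependent set, phrased via `card = rank + 1`. -/
def AuxIsCirc (Φ : ι → E) (C : Finset ι) : Prop :=
  C.card = auxRk Φ C + 1 ∧ ∀ C' ⊂ C, ¬ (C'.card = auxRk Φ C' + 1)

lemma auxExists_circ (Φ : ι → E) :
    ∀ T : Finset ι, auxRk Φ T < T.card → ∃ C, C ⊆ T ∧ AuxIsCirc Φ C := by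
  intro T
  induction T using Finset.strongInduction with
  | _ T ih =>
    intro hT
    by_cases h : ∃ C', C' ⊂ T ∧ auxRk Φ C' < C'.card
    · obtain ⟨C', hC'T, hC'⟩ := h
      obtain ⟨C, hCC', hC⟩ := ih C' hC'T hC'
      exact ⟨C, hCC'.trans hC'T.subset, hC⟩
    · push_neg at h
      have hmin : ∀ C' ⊂ T, auxRk Φ C' = C'.card := fun C' hC' =>
        le_antisymm (auxRk_le_card Φ C') (h C' hC')
      have hTne : T.Nonempty := Finset.card_pos.mp (by omega)
      obtain ⟨x, hx⟩ := hTne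
      have h1 : auxRk Φ (T.erase x) = (T.erase x).card := hmin _ (Finset.erase_ssubset hx)
      have h2 : (T.erase x).card = T.card - 1 := Finset.card_erase_of_mem hx
      have h3 : auxRk Φ (T.erase x) ≤ auxRk Φ T := auxRk_mono Φ (Finset.erase_subset _ _)
      refine ⟨T, Finset.Subset.refl _, ?_, fun C' hC' => ?_⟩
      · omega
      · have := hmin C' hC'
        omega

lemma auxCirc_mem_span {Φ : ι → E} {C : Finset ι} (hC : AuxIsCirc Φ C) {x : ι} (hx : x ∈ C) :
    Φ x ∈ Submodule.span ℝ (Φ '' ↑(C.erase x)) := by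
  by_contra h
  have hlt : Submodule.span ℝ (Φ '' ↑(C.erase x)) < Submodule.span ℝ (Φ '' ↑C) := by
    refine lt_of_le_of_ne
      (Submodule.span_mono (Set.image_mono (Finset.coe_subset.mpr (Finset.erase_subset x C))))
      fun heq => ?_
    rw [heq] at h
    exact h (Submodule.subset_span (Set.mem_image_of_mem Φ (Finset.mem_coe.mpr hx)))
  have h4 : auxRk Φ (C.erase x) < auxRk Φ C := Submodule.finrank_lt_finrank_of_lt hlt
  have h5 : auxRk Φ C ≤ auxRk Φ (C.erase x) + 1 := auxRk_le_erase_add_one Φ hx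
  have h6 : (C.erase x).card = C.card - 1 := Finset.card_erase_of_mem hx
  have h7 := hC.2 (C.erase x) (Finset.erase_ssubset hx)
  have h8 := hC.1
  omega

lemma auxCirc_span_erase {Φ : ι → E} {C : Finset ι} (hC : AuxIsCirc Φ C) {x : ι} (hx : x ∈ C) :
    Submodule.span ℝ (Φ '' ↑(C.erase x)) = Submodule.span ℝ (Φ '' ↑C) := by
  conv_rhs => rw [auxImage_coe_insert Φ hx]
  rw [Submodule.span_insert_eq_span (auxCirc_mem_span hC hx)]

end

/-! #### The dual-functional setup -/

noncomputable section

/-- The functional `x ↦ ∑ aᵢ xᵢ`. -/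
noncomputable def dualOf {k : ℕ} (a : Fin k → ℝ) : Module.Dual ℝ (Fin k → ℝ) :=
  ∑ j, a j • (LinearMap.proj j : (Fin k → ℝ) →ₗ[ℝ] ℝ)

lemma dualOf_apply {k : ℕ} (a x : Fin k → ℝ) : dualOf a x = ∑ j, a j * x j := by
  simp [dualOf]

lemma dualOf_snoc {n : ℕ} (a : Fin n → ℝ) (c : ℝ) (x : Fin n → ℝ) (t : ℝ) :
    dualOf (Fin.snoc a c) (Fin.snoc x t) = dualOf a x + c * t := by
  simp [dualOf_apply, Fin.sum_univ_castSucc]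

variable {n m : ℕ}

/-- The family of functionals cutting out the coned arrangement. -/
noncomputable def PhiFam (H : Fin m → Hyp n) : Fin (m + 1) → Module.Dual ℝ (Fin (n + 1) → ℝ) :=
  fun i => dualOf ((coneArr H i).a)

/-- The family of functionals cutting out the original arrangement. -/
noncomputable def PsiFam (H : Fin m → Hyp n) : Fin m → Module.Dual ℝ (Fin n → ℝ) :=
  fun i => dualOf (H i).a

lemma coneArr_castSucc (H : Fin m → Hyp n) (i : Fin m) :
    coneArr H (Fin.castSucc i) = coneHyp (H i) := by
  simp [coneArr]

lemma coneArr_last (H : Fin m → Hyp n) : coneArr H (Fin.last m) = K0 n := by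
  simp [coneArr]

lemma coneArr_b (H : Fin m → Hyp n) (i : Fin (m + 1)) : (coneArr H i).b = 0 := by
  induction i using Fin.lastCases with
  | last => rw [coneArr_last]; rfl
  | cast i => rw [coneArr_castSucc]; rfl

lemma PhiFam_castSucc (H : Fin m → Hyp n) (i : Fin m) :
    PhiFam H (Fin.castSucc i) = dualOf (Fin.snoc (H i).a (-(H i).b)) := by
  simp [PhiFam, coneArr_castSucc, coneHyp]

lemma PhiFam_last_apply (H : Fin m → Hyp n) (y : Fin (n + 1) → ℝ) :
    PhiFam H (Fin.last m) y = y (Fin.last n) := by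
  simp [PhiFam, coneArr_last, K0, dualOf_apply, Fin.sum_univ_castSucc]

/-! #### Cone intersections -/

lemma interA_cone_coe (H : Fin m → Hyp n) (T : Finset (Fin (m + 1))) :
    interA (coneArr H) T = ↑((Submodule.span ℝ (PhiFam H '' ↑T)).dualCoannihilator) := by
  ext y
  rw [Submodule.coe_dualCoannihilator_span]
  constructor
  · intro hy
    intro f hf
    obtain ⟨i, hi, rfl⟩ := hf
    have hmem := Set.mem_iInter₂.mp hy i (Finset.mem_coe.mp hi)
    have hcar : ∑ j, (coneArr H i).a j * y j = (coneArr H i).b := hmem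
    rw [coneArr_b] at hcar
    show PhiFam H i y = 0
    rw [PhiFam, dualOf_apply, hcar]
  · intro hy
    refine Set.mem_iInter₂.mpr fun i hi => ?_
    have := hy (PhiFam H i) (Set.mem_image_of_mem _ (Finset.mem_coe.mpr hi))
    rw [PhiFam, dualOf_apply] at this
    show ∑ j, (coneArr H i).a j * y j = (coneArr H i).b
    rw [this, coneArr_b]

lemma vectorSpan_coe_submodule {k : ℕ} (p : Submodule ℝ (Fin k → ℝ)) :
    vectorSpan ℝ (p : Set (Fin k → ℝ)) = p := by
  apply le_antisymm
  · apply Submodule.span_le.mpr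
    rintro v ⟨a, ha, b, hb, rfl⟩
    exact p.sub_mem ha hb
  · intro x hx
    have h0 : x -ᵥ (0 : Fin k → ℝ) ∈ (p : Set (Fin k → ℝ)) -ᵥ (p : Set (Fin k → ℝ)) :=
      Set.vsub_mem_vsub hx p.zero_mem
    have h1 : (x -ᵥ (0 : Fin k → ℝ)) = x := by simp [vsub_eq_sub]
    exact h1 ▸ Submodule.subset_span h0

lemma adim_coe_submodule {k : ℕ} (p : Submodule ℝ (Fin k → ℝ)) :
    adim (p : Set (Fin k → ℝ)) = Module.finrank ℝ p := by
  rw [adim, vectorSpan_coe_submodule]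

lemma auxRk_cone_le (H : Fin m → Hyp n) (T : Finset (Fin (m + 1))) :
    auxRk (PhiFam H) T ≤ n + 1 := by
  have h := Subspace.finrank_add_finrank_dualCoannihilator_eq
    (Submodule.span ℝ (PhiFam H '' ↑T))
  rw [Module.finrank_fin_fun] at h
  rw [auxRk_def]
  omega

lemma adim_interA_cone (H : Fin m → Hyp n) (T : Finset (Fin (m + 1))) :
    adim (interA (coneArr H) T) = (n + 1) - auxRk (PhiFam H) T := by
  rw [interA_cone_coe, adim_coe_submodule]
  have h := Subspace.finrank_add_finrank_dualCoannihilator_eq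
    (Submodule.span ℝ (PhiFam H '' ↑T))
  rw [Module.finrank_fin_fun] at h
  rw [auxRk_def]
  omega

lemma zero_mem_interA_cone (H : Fin m → Hyp n) (T : Finset (Fin (m + 1))) :
    (0 : Fin (n + 1) → ℝ) ∈ interA (coneArr H) T := by
  refine Set.mem_iInter₂.mpr fun i hi => ?_
  show ∑ j, (coneArr H i).a j * (0 : Fin (n + 1) → ℝ) j = (coneArr H i).b
  simp [coneArr_b]

lemma circuitProp_cone_iff (H : Fin m → Hyp n) (T : Finset (Fin (m + 1))) :
    CircuitProp (coneArr H) T ↔ T.card = auxRk (PhiFam H) T + 1 := by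
  have hr := auxRk_cone_le H T
  have ha := adim_interA_cone H T
  constructor
  · rintro ⟨-, h⟩
    omega
  · intro h
    exact ⟨⟨0, zero_mem_interA_cone H T⟩, by omega⟩

/-! #### Affine intersections -/

lemma mem_interA_iff (H : Fin m → Hyp n) (S : Finset (Fin m)) (x : Fin n → ℝ) :
    x ∈ interA H S ↔ ∀ i ∈ S, PsiFam H i x = (H i).b := by
  simp [interA, Set.mem_iInter, Hyp.carrier, PsiFam, dualOf_apply]

lemma nonempty_interA_iff (H : Fin m → Hyp n) (S : Finset (Fin m)) :
    (interA H S).Nonempty ↔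
      PhiFam H (Fin.last m) ∉ Submodule.span ℝ (PhiFam H '' ↑(S.image Fin.castSucc)) := by
  constructor
  · rintro ⟨x, hx⟩ hmem
    have hx' : ∀ i ∈ S, PsiFam H i x = (H i).b := (mem_interA_iff H S x).mp hx
    have hy : (Fin.snoc x 1 : Fin (n + 1) → ℝ) ∈
        (Submodule.span ℝ (PhiFam H '' ↑(S.image Fin.castSucc))).dualCoannihilator := by
      have hset : (Fin.snoc x 1 : Fin (n + 1) → ℝ) ∈
          (((Submodule.span ℝ (PhiFam H '' ↑(S.image Fin.castSucc))).dualCoannihilator : Set _)) := by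
        rw [Submodule.coe_dualCoannihilator_span]
        intro f hf
        obtain ⟨j, hj, rfl⟩ := hf
        obtain ⟨i, hi, rfl⟩ := Finset.mem_image.mp (Finset.mem_coe.mp hj)
        rw [PhiFam_castSucc, dualOf_snoc]
        have hxi := hx' i hi
        rw [PsiFam] at hxi
        rw [hxi]
        ring
      exact hset
    have h1 := (Submodule.mem_dualCoannihilator _).mp hy _ hmem
    rw [PhiFam_last_apply, Fin.snoc_last] at h1
    exact one_ne_zero h1
  · intro hmem
    by_contra hne
    apply hmem
    rw [← Subspace.dualCoannihilator_dualAnnihilator_eq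
      (W := Submodule.span ℝ (PhiFam H '' ↑(S.image Fin.castSucc)))]
    rw [Submodule.mem_dualAnnihilator]
    intro y hy
    rw [PhiFam_last_apply]
    by_contra hy0
    apply hne
    refine ⟨(y (Fin.last n))⁻¹ • Fin.init y, (mem_interA_iff H S _).mpr fun i hi => ?_⟩
    have hyi := (Submodule.mem_dualCoannihilator _).mp hy (PhiFam H (Fin.castSucc i))
      (Submodule.subset_span (Set.mem_image_of_mem _
        (Finset.mem_coe.mpr (Finset.mem_image_of_mem _ hi))))
    rw [← Fin.snoc_init_self y, PhiFam_castSucc, dualOf_snoc] at hyi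
    have hb : dualOf (H i).a (Fin.init y) = (H i).b * y (Fin.last n) := by linarith
    show dualOf (H i).a ((y (Fin.last n))⁻¹ • Fin.init y) = (H i).b
    rw [map_smul, hb, smul_eq_mul]
    field_simp

lemma interA_vsub (H : Fin m → Hyp n) (S : Finset (Fin m)) {x₀ : Fin n → ℝ}
    (hx₀ : x₀ ∈ interA H S) :
    interA H S -ᵥ interA H S = ↑((Submodule.span ℝ (PsiFam H '' ↑S)).dualCoannihilator) := by
  rw [Submodule.coe_dualCoannihilator_span]
  ext v
  constructor
  · rintro ⟨a, ha, b, hb, rfl⟩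
    intro f hf
    obtain ⟨i, hi, rfl⟩ := hf
    have ha' := (mem_interA_iff H S a).mp ha i (Finset.mem_coe.mp hi)
    have hb' := (mem_interA_iff H S b).mp hb i (Finset.mem_coe.mp hi)
    show PsiFam H i (a -ᵥ b) = 0
    rw [vsub_eq_sub, map_sub, ha', hb', sub_self]
  · intro hv
    refine ⟨x₀ + v, ?_, x₀, hx₀, by simp [vsub_eq_sub]⟩
    refine (mem_interA_iff H S _).mpr fun i hi => ?_
    have hvi : PsiFam H i v = 0 := hv _ (Set.mem_image_of_mem _ (Finset.mem_coe.mpr hi))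
    have hx' := (mem_interA_iff H S x₀).mp hx₀ i hi
    rw [map_add, hx', hvi, add_zero]

lemma rpsi_le (H : Fin m → Hyp n) (S : Finset (Fin m)) :
    Module.finrank ℝ (Submodule.span ℝ (PsiFam H '' ↑S)) ≤ n := by
  have h := Subspace.finrank_add_finrank_dualCoannihilator_eq
    (Submodule.span ℝ (PsiFam H '' ↑S))
  rw [Module.finrank_fin_fun] at h
  omega

lemma adim_interA_aff (H : Fin m → Hyp n) (S : Finset (Fin m))
    (hne : (interA H S).Nonempty) :
    adim (interA H S) = n - Module.finrank ℝ (Submodule.span ℝ (PsiFam H '' ↑S)) := by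
  obtain ⟨x₀, hx₀⟩ := hne
  rw [adim, vectorSpan, interA_vsub H S hx₀, Submodule.span_eq]
  have h := Subspace.finrank_add_finrank_dualCoannihilator_eq
    (Submodule.span ℝ (PsiFam H '' ↑S))
  rw [Module.finrank_fin_fun] at h
  omega

/-! #### Rank transfer -/

/-- The inclusion `x ↦ (x, 0)`. -/
noncomputable def iota0 {n : ℕ} : (Fin n → ℝ) →ₗ[ℝ] (Fin (n + 1) → ℝ) where
  toFun x := Fin.snoc x 0
  map_add' x y := by
    funext j
    induction j using Fin.lastCases with
    | last => simp
    | cast j => simp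
  map_smul' c x := by
    funext j
    induction j using Fin.lastCases with
    | last => simp
    | cast j => simp

lemma iota0_apply {n : ℕ} (x : Fin n → ℝ) : iota0 x = Fin.snoc x 0 := rfl

/-- Restriction of functionals along `iota0`. -/
noncomputable def ResMap {n : ℕ} :
    Module.Dual ℝ (Fin (n + 1) → ℝ) →ₗ[ℝ] Module.Dual ℝ (Fin n → ℝ) where
  toFun χ := χ.comp iota0
  map_add' χ₁ χ₂ := LinearMap.add_comp _ _ _
  map_smul' c χ := LinearMap.smul_comp _ _ _

lemma ResMap_apply {n : ℕ} (χ : Module.Dual ℝ (Fin (n + 1) → ℝ)) (x : Fin n → ℝ) :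
    ResMap χ x = χ (Fin.snoc x 0) := rfl

lemma ResMap_PhiFam_castSucc (H : Fin m → Hyp n) (i : Fin m) :
    ResMap (PhiFam H (Fin.castSucc i)) = PsiFam H i := by
  refine LinearMap.ext fun x => ?_
  rw [ResMap_apply, PhiFam_castSucc, dualOf_snoc]
  show dualOf (H i).a x + -(H i).b * 0 = PsiFam H i x
  rw [PsiFam]
  ring

lemma ResMap_ker (H : Fin m → Hyp n) {χ : Module.Dual ℝ (Fin (n + 1) → ℝ)}
    (h : ResMap χ = 0) :
    χ = χ ((Fin.snoc 0 1 : Fin (n + 1) → ℝ)) • PhiFam H (Fin.last m) := by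
  refine LinearMap.ext fun y => ?_
  have hdecomp : y = iota0 (Fin.init y) + y (Fin.last n) • (Fin.snoc 0 1 : Fin (n + 1) → ℝ) := by
    funext j
    induction j using Fin.lastCases with
    | last => simp [iota0_apply]
    | cast j => simp [iota0_apply, Fin.init]
  have hz : χ (iota0 (Fin.init y)) = 0 := LinearMap.congr_fun h (Fin.init y)
  calc χ y = χ (iota0 (Fin.init y) + y (Fin.last n) • (Fin.snoc 0 1 : Fin (n + 1) → ℝ)) := by
        rw [← hdecomp]
    _ = y (Fin.last n) * χ ((Fin.snoc 0 1 : Fin (n + 1) → ℝ)) := by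
        rw [map_add, map_smul, hz, zero_add, smul_eq_mul]
    _ = (χ ((Fin.snoc 0 1 : Fin (n + 1) → ℝ)) • PhiFam H (Fin.last m)) y := by
        rw [LinearMap.smul_apply, PhiFam_last_apply, smul_eq_mul]
        ring

set_option maxHeartbeats 1000000 in
set_option synthInstance.maxHeartbeats 400000 in
lemma rk_transfer (H : Fin m → Hyp n) (S : Finset (Fin m))
    (hmem : PhiFam H (Fin.last m) ∉ Submodule.span ℝ (PhiFam H '' ↑(S.image Fin.castSucc))) :
    auxRk (PhiFam H) (S.image Fin.castSucc)
      = Module.finrank ℝ (Submodule.span ℝ (PsiFam H '' ↑S)) := by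
  set W := Submodule.span ℝ (PhiFam H '' ↑(S.image Fin.castSucc)) with hW
  have hker : LinearMap.ker (ResMap.comp W.subtype) = ⊥ := by
    refine LinearMap.ker_eq_bot'.mpr fun χ hχ => ?_
    have h0 : ResMap (χ : Module.Dual ℝ (Fin (n + 1) → ℝ)) = 0 := hχ
    have h1 := ResMap_ker H h0
    by_cases hc : (χ : Module.Dual ℝ (Fin (n + 1) → ℝ)) ((Fin.snoc 0 1 : Fin (n + 1) → ℝ)) = 0
    · have hz : (χ : Module.Dual ℝ (Fin (n + 1) → ℝ)) = 0 := by rw [h1, hc, zero_smul]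
      exact Subtype.ext hz
    · exfalso
      apply hmem
      have heq := congrArg (fun ψ : Module.Dual ℝ (Fin (n + 1) → ℝ) =>
        ((χ : Module.Dual ℝ (Fin (n + 1) → ℝ)) ((Fin.snoc 0 1 : Fin (n + 1) → ℝ)))⁻¹ • ψ) h1
      simp only [smul_smul, inv_mul_cancel₀ hc, one_smul] at heq
      rw [← heq]
      exact Submodule.smul_mem _ _ χ.2
  have hrange : LinearMap.range (ResMap.comp W.subtype)
      = Submodule.span ℝ (PsiFam H '' ↑S) := by
    rw [LinearMap.range_comp, Submodule.range_subtype, hW, Submodule.map_span]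
    congr 1
    rw [Finset.coe_image, ← Set.image_comp, ← Set.image_comp]
    refine Set.image_congr fun i _ => ?_
    show ResMap (PhiFam H (Fin.castSucc i)) = PsiFam H i
    exact ResMap_PhiFam_castSucc H i
  have hinj : Function.Injective ⇑(ResMap.comp W.subtype) := fun a b hab =>
    sub_eq_zero.mp (LinearMap.ker_eq_bot'.mp hker (a - b) (by rw [map_sub (ResMap.comp W.subtype) a b, hab, sub_self]))
  have hfr := LinearMap.finrank_range_of_inj hinj
  rw [hrange] at hfr
  rw [auxRk_def, ← hW, ← hfr]

lemma circuitProp_aff_iff (H : Fin m → Hyp n) (S : Finset (Fin m)) :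
    CircuitProp H S ↔
      (PhiFam H (Fin.last m) ∉ Submodule.span ℝ (PhiFam H '' ↑(S.image Fin.castSucc)) ∧
        S.card = auxRk (PhiFam H) (S.image Fin.castSucc) + 1) := by
  constructor
  · rintro ⟨hne, hdim⟩
    have hmem := (nonempty_interA_iff H S).mp hne
    have ha := adim_interA_aff H S hne
    have hr := rpsi_le H S
    have ht := rk_transfer H S hmem
    exact ⟨hmem, by omega⟩
  · rintro ⟨hmem, hcard⟩
    have hne := (nonempty_interA_iff H S).mpr hmem
    have ha := adim_interA_aff H S hne
    have hr := rpsi_le H S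
    have ht := rk_transfer H S hmem
    exact ⟨hne, by omega⟩

/-! #### Circuit characterizations -/

lemma isAffCircuit_cone_iff (H : Fin m → Hyp n) (T : Finset (Fin (m + 1))) :
    IsAffCircuit (coneArr H) T ↔ AuxIsCirc (PhiFam H) T := by
  unfold IsAffCircuit AuxIsCirc
  rw [circuitProp_cone_iff]
  constructor
  · rintro ⟨h1, h2⟩
    exact ⟨h1, fun T' hT' => by rw [← circuitProp_cone_iff]; exact h2 T' hT'⟩
  · rintro ⟨h1, h2⟩
    exact ⟨h1, fun T' hT' => by rw [circuitProp_cone_iff]; exact h2 T' hT'⟩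

lemma isAffCircuit_aff_iff (H : Fin m → Hyp n) (C : Finset (Fin m)) :
    IsAffCircuit H C ↔
      (PhiFam H (Fin.last m) ∉ Submodule.span ℝ (PhiFam H '' ↑(C.image Fin.castSucc)) ∧
        AuxIsCirc (PhiFam H) (C.image Fin.castSucc)) := by
  have hci : Function.Injective (Fin.castSucc : Fin m → Fin (m + 1)) :=
    Fin.castSucc_injective m
  constructor
  · rintro ⟨h1, h2⟩
    obtain ⟨hmem, hcard⟩ := (circuitProp_aff_iff H C).mp h1
    refine ⟨hmem, ?_, ?_⟩
    · rw [Finset.card_image_of_injective _ hci]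
      exact hcard
    · intro T hT
      obtain ⟨C', hC'sub, rfl⟩ := Finset.subset_image_iff.mp hT.subset
      have hC'C : C' ⊂ C := by
        refine lt_of_le_of_ne hC'sub fun h => ?_
        exact hT.ne (by rw [h])
      have hnc := h2 C' hC'C
      rw [circuitProp_aff_iff] at hnc
      push_neg at hnc
      have hmem' : PhiFam H (Fin.last m)
          ∉ Submodule.span ℝ (PhiFam H '' ↑(C'.image Fin.castSucc)) := fun hh =>
        hmem (Submodule.span_mono (Set.image_mono
          (Finset.coe_subset.mpr (Finset.image_subset_image hC'sub))) hh)
      have hcc := hnc hmem'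
      rw [Finset.card_image_of_injective _ hci]
      exact hcc
  · rintro ⟨hmem, hcirc⟩
    refine ⟨(circuitProp_aff_iff H C).mpr ⟨hmem, ?_⟩, ?_⟩
    · have h1 := hcirc.1
      rw [Finset.card_image_of_injective _ hci] at h1
      exact h1
    · intro C' hC'
      rw [circuitProp_aff_iff]
      rintro ⟨hmem', hcard'⟩
      have himg : C'.image Fin.castSucc ⊂ C.image Fin.castSucc := by
        refine lt_of_le_of_ne (Finset.image_subset_image hC'.subset) fun h => ?_
        have hcs : C ⊆ C' := (Finset.image_subset_image_iff hci).mp (le_of_eq h.symm)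
        exact (Finset.not_subset.mpr (Finset.exists_of_ssubset hC')).elim
          (by
            obtain ⟨x, hxC, hxC'⟩ := Finset.exists_of_ssubset hC'
            exact absurd (hcs hxC) hxC')
      exact hcirc.2 _ himg (by rw [Finset.card_image_of_injective _ hci]; exact hcard')

lemma max'_image_castSucc {m : ℕ} (C : Finset (Fin m)) (hCne : C.Nonempty)
    (hne : (C.image Fin.castSucc).Nonempty) :
    (C.image Fin.castSucc).max' hne = Fin.castSucc (C.max' hCne) := by
  apply le_antisymm
  · apply Finset.max'_le
    intro y hy
    obtain ⟨i, hi, rfl⟩ := Finset.mem_image.mp hy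
    exact Fin.strictMono_castSucc.monotone (Finset.le_max' C i hi)
  · exact Finset.le_max' _ _ (Finset.mem_image_of_mem _ (C.max'_mem hCne))

/-! #### The key broken-circuit lemma -/

lemma no_broken {H : Fin m → Hyp n} {S : Finset (Fin m)} (hS : IsAffNBC H S)
    {C' : Finset (Fin (m + 1))} (hC' : IsAffCircuit (coneArr H) C') (hne : C'.Nonempty) :
    ¬ C'.erase (C'.max' hne) ⊆ S.image Fin.castSucc := by
  intro hsub
  obtain ⟨hSne, hSnb⟩ := hS
  have hmemS := (nonempty_interA_iff H S).mp hSne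
  have hcirc := (isAffCircuit_cone_iff H C').mp hC'
  by_cases hlast : PhiFam H (Fin.last m) ∈ Submodule.span ℝ (PhiFam H '' ↑C')
  · apply hmemS
    have hsp := auxCirc_span_erase hcirc (C'.max'_mem hne)
    rw [← hsp] at hlast
    exact Submodule.span_mono (Set.image_mono (Finset.coe_subset.mpr hsub)) hlast
  · have hnl : Fin.last m ∉ C' := fun h =>
      hlast (Submodule.subset_span (Set.mem_image_of_mem _ (Finset.mem_coe.mpr h)))
    have hsub' : C' ⊆ Finset.univ.image Fin.castSucc := by
      intro j hj
      have hj' : j ≠ Fin.last m := fun h => hnl (h ▸ hj)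
      obtain ⟨i, rfl⟩ := Fin.exists_castSucc_eq.mpr hj'
      exact Finset.mem_image_of_mem _ (Finset.mem_univ i)
    obtain ⟨C, -, rfl⟩ := Finset.subset_image_iff.mp hsub'
    have hC : IsAffCircuit H C := (isAffCircuit_aff_iff H C).mpr ⟨hlast, hcirc⟩
    have hCne : C.Nonempty := hne.of_image
    have hmax : (C.image Fin.castSucc).max' hne = Fin.castSucc (C.max' hCne) :=
      max'_image_castSucc C hCne hne
    rw [hmax, ← Finset.image_erase (Fin.castSucc_injective m)] at hsub
    have hfin : C.erase (C.max' hCne) ⊆ S :=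
      (Finset.image_subset_image_iff (Fin.castSucc_injective m)).mp hsub
    exact hSnb C hC hCne hfin

end

end AuxNBCDev

/-- **Affine NBC subsets via the coning.** Order `𝒜` by `H₁ ≺ ⋯ ≺ H_m` and `c𝒜` by
`cH₁ ≺ ⋯ ≺ cH_m ≺ K₀`. For every `S ⊆ {1, …, m}`, the set `{H_i : i ∈ S}` is an affine
NBC subset of `𝒜` if and only if both `{cH_i : i ∈ S}` and `{cH_i : i ∈ S} ∪ {K₀}` are
affine NBC subsets of `c𝒜`. -/
theorem stmt_17 (n m : ℕ) (H : Fin m → Hyp n)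
    (hinj : Function.Injective fun i => (H i).carrier)
    (S : Finset (Fin m)) :
    IsAffNBC H S ↔
      (IsAffNBC (coneArr H) (S.image Fin.castSucc) ∧
        IsAffNBC (coneArr H) (insert (Fin.last m) (S.image Fin.castSucc))) := by
  classical
  constructor
  · intro hS
    refine ⟨⟨⟨0, zero_mem_interA_cone H _⟩, ?_⟩, ⟨0, zero_mem_interA_cone H _⟩, ?_⟩
    · intro C' hC' hne hsub
      exact no_broken hS hC' hne hsub
    · intro C' hC' hne hsub
      apply no_broken hS hC' hne
      intro x hx
      have hxin := hsub hx
      rcases Finset.mem_insert.mp hxin with h | h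
      · exfalso
        have hxC : x ∈ C' := Finset.mem_of_mem_erase hx
        have hxne : x ≠ C'.max' hne := Finset.ne_of_mem_erase hx
        have hmax : C'.max' hne = Fin.last m :=
          le_antisymm (Fin.le_last _) (h ▸ Finset.le_max' C' x hxC)
        exact hxne (h.trans hmax.symm)
      · exact h
  · rintro ⟨⟨-, h1⟩, ⟨-, h2⟩⟩
    constructor
    · rw [nonempty_interA_iff]
      intro hmem
      have hnotin : Fin.last m ∉ S.image Fin.castSucc := by
        intro h
        obtain ⟨i, -, hi⟩ := Finset.mem_image.mp h
        exact (Fin.castSucc_lt_last i).ne hi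
      have hcD : (insert (Fin.last m) (S.image Fin.castSucc)).card
          = (S.image Fin.castSucc).card + 1 := Finset.card_insert_of_notMem hnotin
      have hspD : Submodule.span ℝ (PhiFam H '' ↑(insert (Fin.last m) (S.image Fin.castSucc)))
          = Submodule.span ℝ (PhiFam H '' ↑(S.image Fin.castSucc)) := by
        rw [Finset.coe_insert, Set.image_insert_eq, Submodule.span_insert_eq_span hmem]
      have hrkD : auxRk (PhiFam H) (insert (Fin.last m) (S.image Fin.castSucc))
          < (insert (Fin.last m) (S.image Fin.castSucc)).card := by
        have h3 : auxRk (PhiFam H) (insert (Fin.last m) (S.image Fin.castSucc))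
            = auxRk (PhiFam H) (S.image Fin.castSucc) := by
          rw [auxRk_def, auxRk_def, hspD]
        have h4 := auxRk_le_card (PhiFam H) (S.image Fin.castSucc)
        omega
      obtain ⟨C, hCD, hC⟩ := auxExists_circ (PhiFam H) _ hrkD
      have hCcirc : IsAffCircuit (coneArr H) C := (isAffCircuit_cone_iff H C).mpr hC
      have hCne : C.Nonempty := Finset.card_pos.mp (by have := hC.1; omega)
      exact h2 C hCcirc hCne ((Finset.erase_subset _ _).trans hCD)
    · intro C hC hCne hsub
      obtain ⟨hmem, hcirc⟩ := (isAffCircuit_aff_iff H C).mp hC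
      have hconeC : IsAffCircuit (coneArr H) (C.image Fin.castSucc) :=
        (isAffCircuit_cone_iff H _).mpr hcirc
      have hne' : (C.image Fin.castSucc).Nonempty := hCne.image _
      apply h1 (C.image Fin.castSucc) hconeC hne'
      have hmax : (C.image Fin.castSucc).max' hne' = Fin.castSucc (C.max' hCne) :=
        max'_image_castSucc C hCne hne'
      rw [hmax, ← Finset.image_erase (Fin.castSucc_injective m)]
      exact Finset.image_subset_image hsub
end
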